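/- arXiv:0810.5009 — 6 statements merged into one kernel-verified Lean document; each statement's English description precedes it below -/
import Mathlib

section
/- Let C₀ ⊂ ℝ² be a closed bounded convex set with nonempty interior and let P : ℝ² → C₀ be the metric projection onto C₀ (P u = u for u ∈ C₀, and P u is the nearest point of C₀ to u otherwise). Suppose W : ℝ² → ℝ is continuous and satisfies W(u) ≥ max_{v ∈ ∂C₀} W(v) for every u ∉ C₀. Then W(P u) ≤ W(u) for every u ∈ ℝ², and for every open set Ω ⊆ ℝ², every locally Lipschitz u : Ω → ℝ², and every measurable S ⊆ Ω, ∫_S (½‖D(P∘u)(x)‖² + W(P∘u(x))) dx ≤ ∫_S (½‖Du(x)‖² + W(u(x))) dx, where the derivatives exist almost everywhere by Rademacher's theorem and ‖·‖ denotes the Frobenius norm. -/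
open MeasureTheory Set
open scoped ENNReal NNReal

noncomputable section

abbrev E2 : Type := EuclideanSpace ℝ (Fin 2)

/-- Squared Frobenius norm of the differential of `u : ℝ² → ℝ²` at `x`
(the domain `ℝ²` carries the coordinates `(x₁, x₂)`). -/
def gradSq (u : ℝ × ℝ → E2) (x : ℝ × ℝ) : ℝ :=
  ‖fderiv ℝ u x ((1 : ℝ), (0 : ℝ))‖ ^ 2 + ‖fderiv ℝ u x ((0 : ℝ), (1 : ℝ))‖ ^ 2

/-- A 1-Lipschitz postcomposition does not increase directional derivatives. -/
lemma fderiv_comp_lip_le {L : E2 → E2} (hL : LipschitzWith 1 L)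
    {f : ℝ × ℝ → E2} {x : ℝ × ℝ} (hf : DifferentiableAt ℝ f x) (e : ℝ × ℝ) :
    ‖fderiv ℝ (L ∘ f) x e‖ ≤ ‖fderiv ℝ f x e‖ := by
  by_cases hd : DifferentiableAt ℝ (L ∘ f) x
  · have h1 : HasLineDerivAt ℝ (L ∘ f) (fderiv ℝ (L ∘ f) x e) x e :=
      hd.hasFDerivAt.hasLineDerivAt e
    have h2 : HasLineDerivAt ℝ f (fderiv ℝ f x e) x e :=
      hf.hasFDerivAt.hasLineDerivAt e
    rw [HasLineDerivAt, hasDerivAt_iff_tendsto_slope] at h1 h2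
    have t1 : Filter.Tendsto (fun t : ℝ => ‖slope (fun t : ℝ => (L ∘ f) (x + t • e)) 0 t‖)
        (nhdsWithin 0 {(0:ℝ)}ᶜ) (nhds ‖fderiv ℝ (L ∘ f) x e‖) :=
      (continuous_norm.continuousAt).tendsto.comp h1
    have t2 : Filter.Tendsto (fun t : ℝ => ‖slope (fun t : ℝ => f (x + t • e)) 0 t‖)
        (nhdsWithin 0 {(0:ℝ)}ᶜ) (nhds ‖fderiv ℝ f x e‖) :=
      (continuous_norm.continuousAt).tendsto.comp h2
    refine le_of_tendsto_of_tendsto' t1 t2 ?_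
    intro t
    simp only [slope, vsub_eq_sub, Function.comp_apply, norm_smul]
    gcongr
    have := hL.dist_le_mul (f (x + t • e)) (f (x + (0:ℝ) • e))
    simpa [dist_eq_norm] using this
  · rw [fderiv_zero_of_not_differentiableAt hd]
    simpa using norm_nonneg _

/-- Projection onto a closed bounded convex set `C₀` with nonempty
interior does not increase `W` (when `W ≥ max_{∂C₀} W` outside `C₀`), nor the energy
`∫_S (½‖Du‖² + W(u))` of any locally Lipschitz map. -/
theorem projection_decreases_energy (C₀ : Set E2)
    (hC₀closed : IsClosed C₀) (hC₀bdd : Bornology.IsBounded C₀)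
    (hC₀conv : Convex ℝ C₀) (hC₀int : (interior C₀).Nonempty)
    (P : E2 → E2)
    (hPmem : ∀ u, P u ∈ C₀)
    (hPid : ∀ u ∈ C₀, P u = u)
    (hPnear : ∀ u : E2, ∀ v ∈ C₀, ‖u - P u‖ ≤ ‖u - v‖)
    (W : E2 → ℝ) (hWcont : Continuous W)
    (hWout : ∀ u ∉ C₀, ∀ v ∈ frontier C₀, W v ≤ W u) :
    (∀ u : E2, W (P u) ≤ W u) ∧
    (∀ Ω : Set (ℝ × ℝ), IsOpen Ω → ∀ u : ℝ × ℝ → E2,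
      (∀ x ∈ Ω, ∃ K : ℝ≥0, ∃ t ∈ nhdsWithin x Ω, LipschitzOnWith K u t) →
      ∀ S : Set (ℝ × ℝ), MeasurableSet S → S ⊆ Ω →
        ∫⁻ x in S, ENNReal.ofReal ((1 / 2) * gradSq (P ∘ u) x + W (P (u x))) ≤
        ∫⁻ x in S, ENNReal.ofReal ((1 / 2) * gradSq u x + W (u x))) := by
  -- variational characterization of P
  haveI : Nonempty C₀ := ⟨⟨_, hPmem 0⟩⟩
  have hvar : ∀ a : E2, ∀ w ∈ C₀, inner ℝ (a - P a) (w - P a) ≤ (0 : ℝ) := by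
    intro a
    rw [← norm_eq_iInf_iff_real_inner_le_zero hC₀conv (hPmem a)]
    refine le_antisymm (le_ciInf fun w => hPnear a w w.2) ?_
    exact ciInf_le ⟨0, fun r ⟨w, hw⟩ => hw ▸ norm_nonneg _⟩ (⟨P a, hPmem a⟩ : C₀)
  -- P is 1-Lipschitz
  have hPlip : LipschitzWith 1 P := by
    refine LipschitzWith.of_dist_le_mul fun a b => ?_
    rw [NNReal.coe_one, one_mul, dist_eq_norm, dist_eq_norm]
    have h1 := hvar a (P b) (hPmem b)
    have h2 := hvar b (P a) (hPmem a)
    have key : ‖P a - P b‖ ^ 2 ≤ inner ℝ (a - b) (P a - P b) := by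
      have e1 : inner ℝ (a - P a) (P b - P a) + inner ℝ (b - P b) (P a - P b) ≤ (0:ℝ) :=
        add_nonpos h1 h2
      have : inner ℝ (a - b) (P a - P b) - ‖P a - P b‖ ^ 2 =
          -(inner ℝ (a - P a) (P b - P a) + inner ℝ (b - P b) (P a - P b)) := by
        rw [← real_inner_self_eq_norm_sq]
        simp only [inner_sub_left, inner_sub_right]
        ring
      linarith [this ▸ neg_nonneg.2 e1]
    have cs : inner ℝ (a - b) (P a - P b) ≤ ‖a - b‖ * ‖P a - P b‖ := real_inner_le_norm _ _
    by_cases h : ‖P a - P b‖ = 0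
    · rw [h]; exact norm_nonneg _
    · have hpos : 0 < ‖P a - P b‖ := lt_of_le_of_ne (norm_nonneg _) (Ne.symm h)
      nlinarith
  -- P maps the exterior to the frontier
  have hfront : ∀ a : E2, a ∉ C₀ → P a ∈ frontier C₀ := by
    intro a ha
    rw [hC₀closed.frontier_eq]
    refine ⟨hPmem a, fun hint => ?_⟩
    obtain ⟨ε, hε, hball⟩ := Metric.mem_nhds_iff.1 (mem_interior_iff_mem_nhds.1 hint)
    have hane : a ≠ P a := fun h => ha (h ▸ hPmem a)
    have hd : 0 < ‖a - P a‖ := by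
      rw [norm_pos_iff]; exact sub_ne_zero.2 hane
    set d := ‖a - P a‖
    set t := min (ε / (2 * d)) (1 / 2) with ht
    have ht0 : 0 < t := lt_min (by positivity) (by norm_num)
    have ht1 : t ≤ 1 / 2 := min_le_right _ _
    set v := P a + t • (a - P a) with hv
    have hvmem : v ∈ C₀ := by
      apply hball
      rw [Metric.mem_ball, dist_eq_norm]
      have : v - P a = t • (a - P a) := by rw [hv]; abel
      rw [this, norm_smul, Real.norm_eq_abs, abs_of_pos ht0]
      calc t * d ≤ ε / (2 * d) * d := by
            exact mul_le_mul_of_nonneg_right (min_le_left _ _) hd.le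
        _ = ε / 2 := by field_simp
        _ < ε := by linarith
    have hlt : ‖a - v‖ < ‖a - P a‖ := by
      have : a - v = (1 - t) • (a - P a) := by
        rw [hv, sub_smul, one_smul]; abel
      rw [this, norm_smul, Real.norm_eq_abs, abs_of_pos (by linarith : (0:ℝ) < 1 - t)]
      nlinarith
    exact absurd (hPnear a v hvmem) (not_le.2 hlt)
  -- Part 1
  have part1 : ∀ a : E2, W (P a) ≤ W a := by
    intro a
    by_cases ha : a ∈ C₀
    · rw [hPid a ha]
    · exact hWout a ha (P a) (hfront a ha)
  refine ⟨part1, ?_⟩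
  intro Ω hΩ u hu S hS hSΩ
  -- a.e. differentiability of u on Ω
  have hae : ∀ᵐ x : ℝ × ℝ, x ∈ Ω → DifferentiableAt ℝ u x := by
    set N := {x | x ∈ Ω ∧ ¬ DifferentiableAt ℝ u x} with hN
    have hNnull : volume N = 0 := by
      apply measure_null_of_locally_null
      intro x hx
      obtain ⟨K, t, htmem, hlip⟩ := hu x hx.1
      have htnhds : t ∈ nhds x := by
        rwa [nhdsWithin_eq_nhds.2 (hΩ.mem_nhds hx.1)] at htmem
      refine ⟨interior t ∩ N, ?_, ?_⟩
      · exact Filter.inter_mem_inf (interior_mem_nhds.2 htnhds) (Filter.mem_principal_self N)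
      · have hlip' : LipschitzOnWith K u (interior t) :=
          hlip.mono interior_subset
        have := hlip'.ae_differentiableWithinAt_of_mem (μ := volume)
        refine measure_mono_null (fun y hy => ?_) this
        rintro hdiff
        have hyint : y ∈ interior t := hy.1
        have : DifferentiableAt ℝ u y :=
          (hdiff hyint).differentiableAt (isOpen_interior.mem_nhds hyint)
        exact hy.2.2 this
    rw [MeasureTheory.ae_iff]
    refine measure_mono_null (fun y hy => ?_) hNnull
    simp only [Classical.not_imp] at hy
    exact hy
  -- pointwise inequality transferred to the restricted measure
  refine lintegral_mono_ae ?_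
  have hmem : ∀ᵐ x ∂(volume.restrict S), x ∈ S := ae_restrict_mem hS
  have hae' : ∀ᵐ x ∂(volume.restrict S), x ∈ Ω → DifferentiableAt ℝ u x :=
    ae_restrict_of_ae hae
  filter_upwards [hmem, hae'] with x hxS hxdiff
  have hdiff : DifferentiableAt ℝ u x := hxdiff (hSΩ hxS)
  apply ENNReal.ofReal_le_ofReal
  have hg : gradSq (P ∘ u) x ≤ gradSq u x := by
    unfold gradSq
    gcongr <;> exact fderiv_comp_lip_le hPlip hdiff _
  have hw : W (P (u x)) ≤ W (u x) := part1 (u x)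
  linarith
end
end

section
/- Let W : ℝⁿ → ℝ be C², let a ∈ ℝⁿ with ∇W(a) = 0, and suppose there exist c > 0 and r₀ > 0 such that ⟨D²W(v)w, w⟩ ≥ c²|w|² for all w and all v with |v − a| ≤ r₀. Let Ω ⊆ ℝ^m be open and let u : Ω → ℝⁿ be a C² solution of Δu = ∇W(u) on Ω with |u(x) − a| ≤ r₀ for all x ∈ Ω. Then the function ρ(x) := |u(x) − a| is C² near every point x₀ with u(x₀) ≠ a, and at every such point it satisfies Δρ(x₀) ≥ c² ρ(x₀). -/
open MeasureTheory Filter Topology Set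
open scoped RealInnerProductSpace ENNReal

noncomputable section

/-- The quadratic form of the Hessian of `W` at `v` evaluated at `w`: `⟨D²W(v)w, w⟩`. -/
def hessQF {n : ℕ} (W : EuclideanSpace ℝ (Fin n) → ℝ)
    (v w : EuclideanSpace ℝ (Fin n)) : ℝ :=
  fderiv ℝ (fun y => fderiv ℝ W y w) v w

/-- Componentwise Laplacian `Δf = ∑ᵢ ∂²f/∂xᵢ²` of a map defined on (an open subset of) `ℝᵐ`. -/
def lap {m : ℕ} {F : Type*} [NormedAddCommGroup F] [NormedSpace ℝ F]
    (f : EuclideanSpace ℝ (Fin m) → F) (x : EuclideanSpace ℝ (Fin m)) : F :=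
  ∑ i : Fin m, fderiv ℝ (fun y => fderiv ℝ f y (EuclideanSpace.single i 1)) x
    (EuclideanSpace.single i 1)

variable {G : Type*} [NormedAddCommGroup G] [NormedSpace ℝ G]
variable {E : Type*} [NormedAddCommGroup E] [InnerProductSpace ℝ E]

variable {G : Type*} [NormedAddCommGroup G] [NormedSpace ℝ G]
variable {E : Type*} [NormedAddCommGroup E] [InnerProductSpace ℝ E]

theorem hasFDerivAt_norm_comp {f : G → E} {f' : G →L[ℝ] E} {x : G}
    (hf : HasFDerivAt f f' x) (h0 : f x ≠ 0) :
    HasFDerivAt (fun y => ‖f y‖) ((‖f x‖)⁻¹ • ((innerSL ℝ (f x)).comp f')) x := by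
  have hq : HasFDerivAt (fun y => ⟪f y, f y⟫)
      ((fderivInnerCLM ℝ (f x, f x)).comp (f'.prod f')) x := hf.inner ℝ hf
  have hqx : (⟪f x, f x⟫ : ℝ) ≠ 0 := by
    rw [real_inner_self_eq_norm_sq]
    exact pow_ne_zero 2 (norm_ne_zero_iff.2 h0)
  have hs := (Real.hasDerivAt_sqrt hqx).comp_hasFDerivAt x hq
  have hnorm : (fun y => ‖f y‖) = fun y => Real.sqrt ⟪f y, f y⟫ := by
    funext y
    rw [real_inner_self_eq_norm_mul_norm, Real.sqrt_mul_self (norm_nonneg _)]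
  rw [hnorm]
  refine hs.congr_fderiv ?_
  symm
  ext e
  simp only [ContinuousLinearMap.coe_smul', Pi.smul_apply, ContinuousLinearMap.coe_comp',
    Function.comp_apply, fderivInnerCLM_apply, ContinuousLinearMap.prod_apply, innerSL_apply_apply]
  rw [real_inner_self_eq_norm_mul_norm, Real.sqrt_mul_self (norm_nonneg _)]
  rw [real_inner_comm (f' e) (f x)]
  have : ‖f x‖ ≠ 0 := norm_ne_zero_iff.2 h0
  field_simp
  ring

theorem grad_lower_bound {n : ℕ} (W : EuclideanSpace ℝ (Fin n) → ℝ) (hW : ContDiff ℝ 2 W)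
    (a : EuclideanSpace ℝ (Fin n)) (ha : gradient W a = 0) (c r₀ : ℝ)
    (hHess : ∀ v, ‖v - a‖ ≤ r₀ →
      ∀ w : EuclideanSpace ℝ (Fin n), c ^ 2 * ‖w‖ ^ 2 ≤ hessQF W v w)
    (p : EuclideanSpace ℝ (Fin n)) (hp : ‖p - a‖ ≤ r₀) :
    c ^ 2 * ‖p - a‖ ^ 2 ≤ ⟪p - a, gradient W p⟫ := by
  set v₀ := p - a with hv₀
  set C := c ^ 2 * ‖v₀‖ ^ 2 with hC
  have hg1 : ContDiff ℝ 1 (fun z => fderiv ℝ W z v₀) :=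
    (hW.fderiv_right (by norm_num)).clm_apply contDiff_const
  set f : ℝ → ℝ := fun t => fderiv ℝ W (a + t • v₀) v₀ with hf
  have hL : ∀ t : ℝ, HasDerivAt (fun s : ℝ => a + s • v₀) v₀ t := by
    intro t
    simpa using ((hasDerivAt_id t).smul_const v₀).const_add a
  have hf' : ∀ t : ℝ, HasDerivAt f (hessQF W (a + t • v₀) v₀) t := by
    intro t
    exact (hg1.differentiable one_ne_zero (a + t • v₀)).hasFDerivAt.comp_hasDerivAt t (hL t)
  set g : ℝ → ℝ := fun t => f t - C * t with hg
  have hg' : ∀ t : ℝ, HasDerivAt g (hessQF W (a + t • v₀) v₀ - C) t := by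
    intro t
    exact (hf' t).sub (by simpa using (hasDerivAt_id t).const_mul C)
  have hmono : MonotoneOn g (Set.Icc 0 1) := by
    apply monotoneOn_of_deriv_nonneg (convex_Icc 0 1)
    · exact fun t _ => ((hg' t).continuousAt).continuousWithinAt
    · exact fun t _ => ((hg' t).differentiableAt).differentiableWithinAt
    · intro t ht
      rw [interior_Icc] at ht
      rw [(hg' t).deriv, sub_nonneg, hC]
      have hmem : ‖(a + t • v₀) - a‖ ≤ r₀ := by
        rw [add_sub_cancel_left, norm_smul, Real.norm_eq_abs,
          abs_of_nonneg ht.1.le]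
        calc t * ‖v₀‖ ≤ 1 * ‖v₀‖ := by
              apply mul_le_mul_of_nonneg_right ht.2.le (norm_nonneg _)
          _ ≤ r₀ := by rw [one_mul]; exact hp
      exact hHess _ hmem v₀
  have h01 : g 0 ≤ g 1 := hmono (by norm_num) (by norm_num) zero_le_one
  have hfa : fderiv ℝ W a = 0 := by
    have := congrArg (InnerProductSpace.toDual ℝ (EuclideanSpace ℝ (Fin n))) ha
    simpa [gradient] using this
  have hf0 : f 0 = 0 := by simp [hf, hfa]
  have hf1 : f 1 = ⟪v₀, gradient W p⟫ := by
    rw [real_inner_comm, gradient, InnerProductSpace.toDual_symm_apply]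
    simp [hf, hv₀]
  have : C ≤ f 1 := by
    have := h01
    simp only [hg, hf0, mul_zero, sub_zero, mul_one, zero_sub] at this
    linarith
  rw [← hf1]; exact this


/-- If `W` is `C²` with `∇W(a) = 0` and Hessian `≥ c²` near `a`, and
`u : Ω → ℝⁿ` is a `C²` solution of `Δu = ∇W(u)` with `|u − a| ≤ r₀` on the open set `Ω`,
then `ρ := |u − a|` is `C²` near every point where `u ≠ a` and satisfies `Δρ ≥ c²ρ` there. -/
theorem polar_radius_subsolution {m n : ℕ}
    (W : EuclideanSpace ℝ (Fin n) → ℝ) (hW : ContDiff ℝ 2 W)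
    (a : EuclideanSpace ℝ (Fin n)) (ha : gradient W a = 0)
    (c r₀ : ℝ) (hc : 0 < c) (hr₀ : 0 < r₀)
    (hHess : ∀ v, ‖v - a‖ ≤ r₀ →
      ∀ w : EuclideanSpace ℝ (Fin n), c ^ 2 * ‖w‖ ^ 2 ≤ hessQF W v w)
    (Ω : Set (EuclideanSpace ℝ (Fin m))) (hΩ : IsOpen Ω)
    (u : EuclideanSpace ℝ (Fin m) → EuclideanSpace ℝ (Fin n))
    (hu : ContDiffOn ℝ 2 u Ω)
    (hsol : ∀ x ∈ Ω, lap u x = gradient W (u x))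
    (hnear : ∀ x ∈ Ω, ‖u x - a‖ ≤ r₀) :
    ∀ x₀ ∈ Ω, u x₀ ≠ a →
      ContDiffAt ℝ 2 (fun x => ‖u x - a‖) x₀ ∧
      c ^ 2 * ‖u x₀ - a‖ ≤ lap (fun x => ‖u x - a‖) x₀ := by
  intro x₀ hx₀ hne
  have hu2 : ContDiffAt ℝ 2 u x₀ := hu.contDiffAt (hΩ.mem_nhds hx₀)
  have hvne : u x₀ - a ≠ 0 := sub_ne_zero.2 hne
  have hC2 : ContDiffAt ℝ 2 (fun x => ‖u x - a‖) x₀ :=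
    (hu2.sub contDiffAt_const).norm ℝ hvne
  refine ⟨hC2, ?_⟩
  set ρ : EuclideanSpace ℝ (Fin m) → ℝ := fun x => ‖u x - a‖ with hρdef
  have hρpos : 0 < ρ x₀ := norm_pos_iff.2 hvne
  have hr : ρ x₀ ≠ 0 := hρpos.ne'
  have hev : ∀ᶠ x in 𝓝 x₀, x ∈ Ω ∧ u x ≠ a :=
    (hΩ.eventually_mem hx₀).and (hu2.continuousAt.eventually_ne hne)
  have hρ' : ∀ x, x ∈ Ω → u x ≠ a →
      HasFDerivAt ρ ((‖u x - a‖)⁻¹ • ((innerSL ℝ (u x - a)).comp (fderiv ℝ u x))) x := by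
    intro x hx hxa
    have hdu : DifferentiableAt ℝ u x :=
      (hu.contDiffAt (hΩ.mem_nhds hx)).differentiableAt (by norm_num)
    exact hasFDerivAt_norm_comp (hdu.hasFDerivAt.sub_const a) (sub_ne_zero.2 hxa)
  have hdux₀ : DifferentiableAt ℝ u x₀ := hu2.differentiableAt (by norm_num)
  have hdu1 : ContDiffAt ℝ 1 (fderiv ℝ u) x₀ := hu2.fderiv_right (by norm_num)
  have hρd : DifferentiableAt ℝ ρ x₀ := hC2.differentiableAt (by norm_num)
  have key : ∀ i : Fin m,
      ⟪u x₀ - a, fderiv ℝ (fun y => fderiv ℝ u y (EuclideanSpace.single i 1)) x₀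
        (EuclideanSpace.single i 1)⟫ / ρ x₀ ≤
      fderiv ℝ (fun y => fderiv ℝ ρ y (EuclideanSpace.single i 1)) x₀
        (EuclideanSpace.single i 1) := by
    intro i
    set e : EuclideanSpace ℝ (Fin m) := EuclideanSpace.single i 1 with he
    set N : EuclideanSpace ℝ (Fin m) → ℝ := fun y => ⟪u y - a, fderiv ℝ u y e⟫ with hN
    have h_ev : (fun y => fderiv ℝ ρ y e) =ᶠ[𝓝 x₀] fun y => N y * (ρ y)⁻¹ := by
      filter_upwards [hev] with x hx
      rw [(hρ' x hx.1 hx.2).fderiv]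
      simp only [ContinuousLinearMap.coe_smul', Pi.smul_apply,
        ContinuousLinearMap.coe_comp', Function.comp_apply, innerSL_apply_apply, smul_eq_mul]
      rw [mul_comm]
    rw [h_ev.fderiv_eq]
    have hvd : DifferentiableAt ℝ (fun y => u y - a) x₀ := hdux₀.sub_const a
    have hgd : DifferentiableAt ℝ (fun y => fderiv ℝ u y e) x₀ :=
      (hdu1.differentiableAt one_ne_zero).clm_apply (differentiableAt_const e)
    have hNd : DifferentiableAt ℝ N x₀ := hvd.inner ℝ hgd
    have hinv : HasFDerivAt (fun y => (ρ y)⁻¹) ((-(ρ x₀ ^ 2)⁻¹) • fderiv ℝ ρ x₀) x₀ := by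
      have := (hasDerivAt_inv hr).comp_hasFDerivAt x₀ hρd.hasFDerivAt
      exact this
    have hprod := hNd.hasFDerivAt.mul hinv
    have hT : fderiv ℝ (fun y => N y * (ρ y)⁻¹) x₀ e =
        N x₀ * (-(ρ x₀ ^ 2)⁻¹ * fderiv ℝ ρ x₀ e) + (ρ x₀)⁻¹ * fderiv ℝ N x₀ e := by
      rw [show (fun y => N y * (ρ y)⁻¹) = (N * fun y => (ρ y)⁻¹) from rfl, hprod.fderiv]
      simp [smul_eq_mul]

    have hNe : fderiv ℝ N x₀ e =
        ⟪u x₀ - a, fderiv ℝ (fun y => fderiv ℝ u y e) x₀ e⟫ +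
        ⟪fderiv ℝ u x₀ e, fderiv ℝ u x₀ e⟫ := by
      rw [hN, fderiv_inner_apply ℝ hvd hgd e]
      congr 1
      rw [fderiv_sub_const]
    have hρe : fderiv ℝ ρ x₀ e = N x₀ * (ρ x₀)⁻¹ := by
      rw [(hρ' x₀ hx₀ hne).fderiv]
      simp only [ContinuousLinearMap.coe_smul', Pi.smul_apply,
        ContinuousLinearMap.coe_comp', Function.comp_apply, innerSL_apply_apply, smul_eq_mul]
      rw [mul_comm]
    rw [hT, hNe, hρe]
    set S := fderiv ℝ (fun y => fderiv ℝ u y e) x₀ e with hS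
    set D := fderiv ℝ u x₀ e with hD
    have hCS : N x₀ * N x₀ ≤ (ρ x₀ * ρ x₀) * ⟪D, D⟫ := by
      have h := real_inner_mul_inner_self_le (u x₀ - a) D
      rwa [real_inner_self_eq_norm_mul_norm (u x₀ - a)] at h
    have hr3 : (0:ℝ) < ρ x₀ ^ 3 := by positivity
    have hsub : N x₀ * (-(ρ x₀ ^ 2)⁻¹ * (N x₀ * (ρ x₀)⁻¹)) +
        (ρ x₀)⁻¹ * (⟪u x₀ - a, S⟫ + ⟪D, D⟫) - ⟪u x₀ - a, S⟫ / ρ x₀ =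
        (⟪D, D⟫ * ρ x₀ ^ 2 - N x₀ ^ 2) / ρ x₀ ^ 3 := by
      field_simp
      ring
    rw [← sub_nonneg, hsub]
    apply div_nonneg _ hr3.le
    nlinarith [hCS]
  have hsumle : ∑ i : Fin m, (⟪u x₀ - a, fderiv ℝ (fun y => fderiv ℝ u y
      (EuclideanSpace.single i 1)) x₀ (EuclideanSpace.single i 1)⟫ / ρ x₀) ≤ lap ρ x₀ :=
    Finset.sum_le_sum fun i _ => key i
  have hsum : ∑ i : Fin m, (⟪u x₀ - a, fderiv ℝ (fun y => fderiv ℝ u y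
      (EuclideanSpace.single i 1)) x₀ (EuclideanSpace.single i 1)⟫ / ρ x₀)
      = ⟪u x₀ - a, lap u x₀⟫ / ρ x₀ := by
    rw [← Finset.sum_div]
    congr 1
    rw [lap, inner_sum]
  have hlow : c ^ 2 * ‖u x₀ - a‖ ^ 2 ≤ ⟪u x₀ - a, lap u x₀⟫ := by
    rw [hsol x₀ hx₀]
    exact grad_lower_bound W hW a ha c r₀ hHess (u x₀) (hnear x₀ hx₀)
  have hfin : c ^ 2 * ‖u x₀ - a‖ ^ 2 / ρ x₀ ≤ lap ρ x₀ := by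
    calc c ^ 2 * ‖u x₀ - a‖ ^ 2 / ρ x₀ ≤ ⟪u x₀ - a, lap u x₀⟫ / ρ x₀ := by
          exact div_le_div_of_nonneg_right hlow hρpos.le
      _ = _ := hsum.symm
      _ ≤ lap ρ x₀ := hsumle
  have heq : c ^ 2 * ‖u x₀ - a‖ ^ 2 / ρ x₀ = c ^ 2 * ‖u x₀ - a‖ := by
    rw [hρdef]
    field_simp
  rw [← heq]
  exact hfin
end
end

section
/- Let c > 0, r > 0, R ≥ 1, and 1/2 < η < μ < ∞, and let C = [ηR, μR] × [−R, R]. Suppose v : C → ℝ is continuous on C, C² in the interior of C, admits one-sided normal derivatives on the boundary edges, and satisfies: Δv ≥ c² v in the interior of C; v(ηR, x₂) ≤ r for all x₂ ∈ [−R, R]; ∂v/∂x₂(x₁, R) ≤ 0 and ∂v/∂x₂(x₁, −R) ≥ 0 for all x₁ ∈ (ηR, μR]; and ∂v/∂x₁(μR, x₂) ≤ 0 for all x₂ ∈ (−R, R). Then for every (x₁, x₂) ∈ C, v(x₁, x₂) ≤ r · cosh(c(μR − x₁)) / cosh(c(μ − η)R). -/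
open Set Filter Topology

lemma deriv_nonneg_of_isLocalMaxOn_Iic {f : ℝ → ℝ} {d x : ℝ}
    (hmax : IsLocalMaxOn f (Iic x) x) (hf : HasDerivWithinAt f d (Iic x) x) : 0 ≤ d := by
  have hseg : segment ℝ x (x + (-1 : ℝ)) ⊆ Iic x := by
    rw [segment_symm, segment_eq_Icc (by linarith)]
    exact fun z hz => hz.2
  have hmem : (-1 : ℝ) ∈ posTangentConeAt (Iic x) x :=
    mem_posTangentConeAt_of_segment_subset hseg
  have h := hmax.hasFDerivWithinAt_nonpos hf.hasFDerivWithinAt hmem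
  simp [ContinuousLinearMap.smulRight_apply] at h
  linarith

lemma deriv_nonpos_of_isLocalMaxOn_Ici {f : ℝ → ℝ} {d x : ℝ}
    (hmax : IsLocalMaxOn f (Ici x) x) (hf : HasDerivWithinAt f d (Ici x) x) : d ≤ 0 := by
  have hseg : segment ℝ x (x + (1 : ℝ)) ⊆ Ici x := by
    rw [segment_eq_Icc (by linarith)]
    exact fun z hz => hz.1
  have hmem : (1 : ℝ) ∈ posTangentConeAt (Ici x) x :=
    mem_posTangentConeAt_of_segment_subset hseg
  have h := hmax.hasFDerivWithinAt_nonpos hf.hasFDerivWithinAt hmem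
  simpa [ContinuousLinearMap.smulRight_apply] using h

lemma second_deriv_nonpos_of_isLocalMax {f : ℝ → ℝ} {a d : ℝ}
    (hmax : IsLocalMax f a)
    (hf : ∀ᶠ t in 𝓝 a, DifferentiableAt ℝ f t)
    (hd : HasDerivAt (deriv f) d a) : d ≤ 0 := by
  by_contra hpos
  push_neg at hpos
  have h0 : deriv f a = 0 := hmax.deriv_eq_zero
  have hslope : Tendsto (slope (deriv f) a) (𝓝[≠] a) (𝓝 d) :=
    hasDerivAt_iff_tendsto_slope.1 hd
  have hev1 : ∀ᶠ t in 𝓝[>] a, 0 < slope (deriv f) a t :=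
    (hslope.mono_left (nhdsWithin_mono _ fun t ht => ne_of_gt ht)).eventually
      (eventually_gt_nhds hpos)
  have hev : ∀ᶠ t in 𝓝[>] a,
      0 < deriv f t ∧ DifferentiableAt ℝ f t ∧ f t ≤ f a := by
    filter_upwards [hev1, hf.filter_mono nhdsWithin_le_nhds,
      (hmax.filter_mono nhdsWithin_le_nhds : ∀ᶠ t in 𝓝[>] a, f t ≤ f a),
      self_mem_nhdsWithin] with t h1 h2 h3 (ht : a < t)
    refine ⟨?_, h2, h3⟩
    rw [slope_def_field, h0, sub_zero] at h1
    have := mul_pos h1 (sub_pos.2 ht)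
    rwa [div_mul_cancel₀ _ (ne_of_gt (sub_pos.2 ht))] at this
  rcases mem_nhdsGT_iff_exists_Ioo_subset.1 hev with ⟨u, (hu : a < u), hsub⟩
  set m := (a + u) / 2 with hm
  have ham : a < m := by rw [hm]; linarith
  have hmu : m < u := by rw [hm]; linarith
  have hdiff : ∀ z ∈ Icc a m, DifferentiableAt ℝ f z := by
    intro z hz
    rcases eq_or_lt_of_le hz.1 with h | h
    · exact h ▸ hf.self_of_nhds
    · exact (hsub ⟨h, lt_of_le_of_lt hz.2 hmu⟩).2.1
  have hsm : StrictMonoOn f (Icc a m) := by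
    apply strictMonoOn_of_deriv_pos (convex_Icc a m)
      (fun z hz => (hdiff z hz).continuousAt.continuousWithinAt)
    intro z hz
    rw [interior_Icc] at hz
    exact (hsub ⟨hz.1, lt_trans hz.2 hmu⟩).1
  have h1 : f a < f m := hsm ⟨le_refl a, le_of_lt ham⟩ ⟨le_of_lt ham, le_refl m⟩ ham
  have h2 : f m ≤ f a := (hsub ⟨ham, hmu⟩).2.2
  linarith

set_option maxHeartbeats 2000000

noncomputable section

/-- The Laplacian of a function of two real variables. -/
def lap2 (v : ℝ × ℝ → ℝ) (x : ℝ × ℝ) : ℝ :=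
  fderiv ℝ (fun y => fderiv ℝ v y ((1 : ℝ), (0 : ℝ))) x (1, 0) +
  fderiv ℝ (fun y => fderiv ℝ v y ((0 : ℝ), (1 : ℝ))) x (0, 1)

/-- Comparison estimate on the rectangle `C = [ηR, μR] × [−R, R]`:
if `Δv ≥ c²v` in the interior, `v ≤ r` on the left edge, and the outward normal
derivative of `v` is nonpositive on the other three edges, then
`v(x₁,x₂) ≤ r cosh(c(μR − x₁)) / cosh(c(μ − η)R)` on `C`. -/
theorem cosh_comparison_rectangle (c r R η μ : ℝ)
    (hc : 0 < c) (hr : 0 < r) (hR : 1 ≤ R) (hη : 1 / 2 < η) (hημ : η < μ)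
    (v : ℝ × ℝ → ℝ)
    (hcont : ContinuousOn v (Icc (η * R) (μ * R) ×ˢ Icc (-R) R))
    (hC2 : ContDiffOn ℝ 2 v (Ioo (η * R) (μ * R) ×ˢ Ioo (-R) R))
    (hsub : ∀ x ∈ Ioo (η * R) (μ * R) ×ˢ Ioo (-R) R, c ^ 2 * v x ≤ lap2 v x)
    (hleft : ∀ x₂ ∈ Icc (-R) R, v (η * R, x₂) ≤ r)
    (htop : ∀ x₁ ∈ Ioc (η * R) (μ * R),
      DifferentiableWithinAt ℝ (fun t => v (x₁, t)) (Iic R) R ∧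
      derivWithin (fun t => v (x₁, t)) (Iic R) R ≤ 0)
    (hbot : ∀ x₁ ∈ Ioc (η * R) (μ * R),
      DifferentiableWithinAt ℝ (fun t => v (x₁, t)) (Ici (-R)) (-R) ∧
      0 ≤ derivWithin (fun t => v (x₁, t)) (Ici (-R)) (-R))
    (hright : ∀ x₂ ∈ Ioo (-R) R,
      DifferentiableWithinAt ℝ (fun t => v (t, x₂)) (Iic (μ * R)) (μ * R) ∧
      derivWithin (fun t => v (t, x₂)) (Iic (μ * R)) (μ * R) ≤ 0) :
    ∀ x ∈ Icc (η * R) (μ * R) ×ˢ Icc (-R) R,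
      v x ≤ r * Real.cosh (c * (μ * R - x.1)) / Real.cosh (c * (μ - η) * R) := by
  have hR0 : (0:ℝ) < R := lt_of_lt_of_le one_pos hR
  have hab : η * R < μ * R := by nlinarith
  have hRR : -R < R := by linarith
  set K := Real.cosh (c * (μ - η) * R) with hKdef
  have hK0 : (0:ℝ) < K := by rw [hKdef]; exact Real.cosh_pos _
  have hKval : Real.cosh (c * (μ * R - η * R)) = K := by
    rw [hKdef]; congr 1; ring
  have hs1 : 0 < Real.sinh (c * R) := Real.sinh_pos_iff.2 (mul_pos hc hR0)
  have key : ∀ ε : ℝ, 0 < ε → ∀ g : ℝ × ℝ → ℝ,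
      g = (fun x => v x - (r / K) * Real.cosh (c * (μ * R - x.1))
        - ε * (Real.cosh (c * x.2) + Real.cosh (c * (x.1 - η * R)))) →
      ∀ x ∈ Icc (η * R) (μ * R) ×ˢ Icc (-R) R, g x ≤ 0 := by
    intro ε hε g hg
    by_contra hcon
    push_neg at hcon
    obtain ⟨y, hy, hgy⟩ := hcon
    have hgc : ContinuousOn g (Icc (η * R) (μ * R) ×ˢ Icc (-R) R) := by
      rw [hg]
      exact (hcont.sub (Continuous.continuousOn (by fun_prop))).sub
        (Continuous.continuousOn (by fun_prop))
    obtain ⟨x₀, hx₀C, hx₀max⟩ :=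
      (isCompact_Icc.prod isCompact_Icc).exists_isMaxOn ⟨y, hy⟩ hgc
    obtain ⟨a, b⟩ := x₀
    have hmax : ∀ x ∈ Icc (η * R) (μ * R) ×ˢ Icc (-R) R, g x ≤ g (a, b) :=
      isMaxOn_iff.mp hx₀max
    have hg0 : 0 < g (a, b) := lt_of_lt_of_le hgy (hmax y hy)
    have ha : a ∈ Icc (η * R) (μ * R) := hx₀C.1
    have hb : b ∈ Icc (-R) R := hx₀C.2
    -- case: left edge
    rcases eq_or_lt_of_le ha.1 with haeq | hagt
    · have h1 : v (η * R, b) ≤ r := hleft b hb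
      have hgval : g (a, b) = v (η * R, b) - r
          - ε * (Real.cosh (c * b) + Real.cosh (c * (η * R - η * R))) := by
        rw [hg, ← haeq]
        simp only
        rw [hKval, div_mul_cancel₀ _ (ne_of_gt hK0)]
      nlinarith [Real.one_le_cosh (c * b), Real.one_le_cosh (c * (η * R - η * R))]
    -- case: top edge
    rcases eq_or_lt_of_le hb.2 with hbR | hbR'
    · rw [hbR] at hmax
      have hDW := htop a ⟨hagt, ha.2⟩
      have hqmax : IsLocalMaxOn (fun t => g (a, t)) (Iic R) R := by
        have h1 : ∀ᶠ t in 𝓝[Iic R] R, -R < t :=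
          (eventually_gt_nhds hRR).filter_mono nhdsWithin_le_nhds
        filter_upwards [h1, self_mem_nhdsWithin] with t ht1 ht2
        exact hmax (a, t) ⟨ha, ⟨le_of_lt ht1, ht2⟩⟩
      have hqd : HasDerivWithinAt (fun t => g (a, t))
          (derivWithin (fun t => v (a, t)) (Iic R) R - 0
            - ε * (Real.sinh (c * R) * (c * 1) + 0)) (Iic R) R := by
        rw [hg]
        exact ((hDW.1.hasDerivWithinAt.sub
          (hasDerivAt_const R ((r / K) * Real.cosh (c * (μ * R - a)))).hasDerivWithinAt).sub
          (((((hasDerivAt_id R).const_mul c).cosh).add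
            (hasDerivAt_const R (Real.cosh (c * (a - η * R))))).const_mul ε).hasDerivWithinAt)
      have h0le := deriv_nonneg_of_isLocalMaxOn_Iic hqmax hqd
      nlinarith [hDW.2, mul_pos hε (mul_pos hs1 hc)]
    -- case: bottom edge
    rcases eq_or_lt_of_le hb.1 with hbB | hbB'
    · rw [← hbB] at hmax
      have hDW := hbot a ⟨hagt, ha.2⟩
      have hqmax : IsLocalMaxOn (fun t => g (a, t)) (Ici (-R)) (-R) := by
        have h1 : ∀ᶠ t in 𝓝[Ici (-R)] (-R), t < R :=
          (eventually_lt_nhds hRR).filter_mono nhdsWithin_le_nhds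
        filter_upwards [h1, self_mem_nhdsWithin] with t ht1 ht2
        exact hmax (a, t) ⟨ha, ⟨ht2, le_of_lt ht1⟩⟩
      have hqd : HasDerivWithinAt (fun t => g (a, t))
          (derivWithin (fun t => v (a, t)) (Ici (-R)) (-R) - 0
            - ε * (Real.sinh (c * (-R)) * (c * 1) + 0)) (Ici (-R)) (-R) := by
        rw [hg]
        exact ((hDW.1.hasDerivWithinAt.sub
          (hasDerivAt_const (-R) ((r / K) * Real.cosh (c * (μ * R - a)))).hasDerivWithinAt).sub
          (((((hasDerivAt_id (-R)).const_mul c).cosh).add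
            (hasDerivAt_const (-R) (Real.cosh (c * (a - η * R))))).const_mul ε).hasDerivWithinAt)
      have h0le := deriv_nonpos_of_isLocalMaxOn_Ici hqmax hqd
      have hneg : Real.sinh (c * (-R)) = -Real.sinh (c * R) := by
        rw [show c * (-R) = -(c * R) by ring, Real.sinh_neg]
      rw [hneg] at h0le
      nlinarith [hDW.2, mul_pos hε (mul_pos hs1 hc)]
    -- case: right edge
    rcases eq_or_lt_of_le ha.2 with haR | haR'
    · rw [haR] at hmax
      have hDW := hright b ⟨hbB', hbR'⟩
      have hpmax : IsLocalMaxOn (fun t => g (t, b)) (Iic (μ * R)) (μ * R) := by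
        have h1 : ∀ᶠ t in 𝓝[Iic (μ * R)] (μ * R), η * R < t :=
          (eventually_gt_nhds hab).filter_mono nhdsWithin_le_nhds
        filter_upwards [h1, self_mem_nhdsWithin] with t ht1 ht2
        exact hmax (t, b) ⟨⟨le_of_lt ht1, ht2⟩, hb⟩
      have hpd : HasDerivWithinAt (fun t => g (t, b))
          (derivWithin (fun t => v (t, b)) (Iic (μ * R)) (μ * R)
            - (r / K) * (Real.sinh (c * (μ * R - μ * R)) * (c * -1))
            - ε * (0 + Real.sinh (c * (μ * R - η * R)) * (c * 1))) (Iic (μ * R)) (μ * R) := by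
        rw [hg]
        exact ((hDW.1.hasDerivWithinAt.sub
          (((((hasDerivAt_id (μ * R)).const_sub (μ * R)).const_mul c).cosh).const_mul
            (r / K)).hasDerivWithinAt).sub
          (((hasDerivAt_const (μ * R) (Real.cosh (c * b))).add
            ((((hasDerivAt_id (μ * R)).sub_const (η * R)).const_mul c).cosh)).const_mul
              ε).hasDerivWithinAt)
      have h0le := deriv_nonneg_of_isLocalMaxOn_Iic hpmax hpd
      have hz : Real.sinh (c * (μ * R - μ * R)) = 0 := by
        rw [show c * (μ * R - μ * R) = 0 by ring, Real.sinh_zero]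
      rw [hz] at h0le
      have hs2 : 0 < Real.sinh (c * (μ * R - η * R)) :=
        Real.sinh_pos_iff.2 (by nlinarith)
      nlinarith [hDW.2, mul_pos hε (mul_pos hs2 hc)]
    -- interior case
    have hUopen : IsOpen (Ioo (η * R) (μ * R) ×ˢ Ioo (-R) R) := isOpen_Ioo.prod isOpen_Ioo
    have hxU : (a, b) ∈ Ioo (η * R) (μ * R) ×ˢ Ioo (-R) R := ⟨⟨hagt, haR'⟩, ⟨hbB', hbR'⟩⟩
    have hC2' : ContDiffOn ℝ ((1 : WithTop ℕ∞) + 1) v (Ioo (η * R) (μ * R) ×ˢ Ioo (-R) R) := by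
      norm_num
      exact hC2
    obtain ⟨hdv, -, hfd⟩ := (contDiffOn_succ_iff_fderiv_of_isOpen hUopen).1 hC2'
    have hdF : DifferentiableOn ℝ (fderiv ℝ v) (Ioo (η * R) (μ * R) ×ˢ Ioo (-R) R) :=
      hfd.differentiableOn one_ne_zero
    have hdFat : DifferentiableAt ℝ (fderiv ℝ v) (a, b) :=
      hdF.differentiableAt (hUopen.mem_nhds hxU)
    have hVd1 : DifferentiableAt ℝ (fun y => fderiv ℝ v y ((1 : ℝ), (0 : ℝ))) (a, b) :=
      hdFat.clm_apply (differentiableAt_const _)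
    have hVd2 : DifferentiableAt ℝ (fun y => fderiv ℝ v y ((0 : ℝ), (1 : ℝ))) (a, b) :=
      hdFat.clm_apply (differentiableAt_const _)
    -- first coordinate slice
    have hev1 : ∀ᶠ t in 𝓝 a, (t, b) ∈ Ioo (η * R) (μ * R) ×ˢ Ioo (-R) R := by
      have hcnt : Continuous fun t : ℝ => (t, b) := continuous_id.prodMk continuous_const
      exact hcnt.continuousAt.preimage_mem_nhds (hUopen.mem_nhds hxU)
    have hslice1 : ∀ t, (t, b) ∈ Ioo (η * R) (μ * R) ×ˢ Ioo (-R) R →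
        HasDerivAt (fun s => g (s, b))
          (fderiv ℝ v (t, b) ((1 : ℝ), (0 : ℝ))
            - (r / K) * (Real.sinh (c * (μ * R - t)) * (c * -1))
            - ε * (0 + Real.sinh (c * (t - η * R)) * (c * 1))) t := by
      intro t ht
      rw [hg]
      have hv1 : HasDerivAt (fun s => v (s, b)) (fderiv ℝ v (t, b) ((1 : ℝ), (0 : ℝ))) t :=
        ((hdv.differentiableAt (hUopen.mem_nhds ht)).hasFDerivAt).comp_hasDerivAt t
          ((hasDerivAt_id t).prodMk (hasDerivAt_const t b))
      exact (hv1.sub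
        (((((hasDerivAt_id t).const_sub (μ * R)).const_mul c).cosh).const_mul (r / K))).sub
        (((hasDerivAt_const t (Real.cosh (c * b))).add
          ((((hasDerivAt_id t).sub_const (η * R)).const_mul c).cosh)).const_mul ε)
    have hp' : deriv (fun s => g (s, b)) =ᶠ[𝓝 a] fun t =>
        fderiv ℝ v (t, b) ((1 : ℝ), (0 : ℝ))
          - (r / K) * (Real.sinh (c * (μ * R - t)) * (c * -1))
          - ε * (0 + Real.sinh (c * (t - η * R)) * (c * 1)) := by
      filter_upwards [hev1] with t ht
      exact (hslice1 t ht).deriv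
    have hE1 : HasDerivAt (fun t =>
        fderiv ℝ v (t, b) ((1 : ℝ), (0 : ℝ))
          - (r / K) * (Real.sinh (c * (μ * R - t)) * (c * -1))
          - ε * (0 + Real.sinh (c * (t - η * R)) * (c * 1)))
        (fderiv ℝ (fun y => fderiv ℝ v y ((1 : ℝ), (0 : ℝ))) (a, b) ((1 : ℝ), (0 : ℝ))
          - (r / K) * (Real.cosh (c * (μ * R - a)) * (c * -1) * (c * -1))
          - ε * (0 + Real.cosh (c * (a - η * R)) * (c * 1) * (c * 1))) a := by
      refine HasDerivAt.sub (HasDerivAt.sub ?_ ?_) ?_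
      · exact hVd1.hasFDerivAt.comp_hasDerivAt a
          ((hasDerivAt_id a).prodMk (hasDerivAt_const a b))
      · exact (((((hasDerivAt_id a).const_sub (μ * R)).const_mul c).sinh).mul_const
          (c * -1)).const_mul (r / K)
      · exact ((hasDerivAt_const a (0 : ℝ)).add
          (((((hasDerivAt_id a).sub_const (η * R)).const_mul c).sinh).mul_const
            (c * 1))).const_mul ε
    have hdp : HasDerivAt (deriv (fun s => g (s, b)))
        (fderiv ℝ (fun y => fderiv ℝ v y ((1 : ℝ), (0 : ℝ))) (a, b) ((1 : ℝ), (0 : ℝ))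
          - (r / K) * (Real.cosh (c * (μ * R - a)) * (c * -1) * (c * -1))
          - ε * (0 + Real.cosh (c * (a - η * R)) * (c * 1) * (c * 1))) a :=
      hE1.congr_of_eventuallyEq hp'
    have hpmax : IsLocalMax (fun s => g (s, b)) a := by
      filter_upwards [hev1] with t ht
      exact hmax (t, b) ⟨⟨le_of_lt ht.1.1, le_of_lt ht.1.2⟩, ⟨le_of_lt ht.2.1, le_of_lt ht.2.2⟩⟩
    have hpdiff : ∀ᶠ t in 𝓝 a, DifferentiableAt ℝ (fun s => g (s, b)) t := by
      filter_upwards [hev1] with t ht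
      exact (hslice1 t ht).differentiableAt
    have hd1 := second_deriv_nonpos_of_isLocalMax hpmax hpdiff hdp
    -- second coordinate slice
    have hev2 : ∀ᶠ t in 𝓝 b, (a, t) ∈ Ioo (η * R) (μ * R) ×ˢ Ioo (-R) R := by
      have hcnt : Continuous fun t : ℝ => (a, t) := continuous_const.prodMk continuous_id
      exact hcnt.continuousAt.preimage_mem_nhds (hUopen.mem_nhds hxU)
    have hslice2 : ∀ t, (a, t) ∈ Ioo (η * R) (μ * R) ×ˢ Ioo (-R) R →
        HasDerivAt (fun s => g (a, s))
          (fderiv ℝ v (a, t) ((0 : ℝ), (1 : ℝ)) - 0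
            - ε * (Real.sinh (c * t) * (c * 1) + 0)) t := by
      intro t ht
      rw [hg]
      have hv2 : HasDerivAt (fun s => v (a, s)) (fderiv ℝ v (a, t) ((0 : ℝ), (1 : ℝ))) t :=
        ((hdv.differentiableAt (hUopen.mem_nhds ht)).hasFDerivAt).comp_hasDerivAt t
          ((hasDerivAt_const t a).prodMk (hasDerivAt_id t))
      exact (hv2.sub
        (hasDerivAt_const t ((r / K) * Real.cosh (c * (μ * R - a))))).sub
        (((((hasDerivAt_id t).const_mul c).cosh).add
          (hasDerivAt_const t (Real.cosh (c * (a - η * R))))).const_mul ε)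
    have hq' : deriv (fun s => g (a, s)) =ᶠ[𝓝 b] fun t =>
        fderiv ℝ v (a, t) ((0 : ℝ), (1 : ℝ)) - 0
          - ε * (Real.sinh (c * t) * (c * 1) + 0) := by
      filter_upwards [hev2] with t ht
      exact (hslice2 t ht).deriv
    have hE2 : HasDerivAt (fun t =>
        fderiv ℝ v (a, t) ((0 : ℝ), (1 : ℝ)) - 0
          - ε * (Real.sinh (c * t) * (c * 1) + 0))
        (fderiv ℝ (fun y => fderiv ℝ v y ((0 : ℝ), (1 : ℝ))) (a, b) ((0 : ℝ), (1 : ℝ)) - 0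
          - ε * (Real.cosh (c * b) * (c * 1) * (c * 1) + 0)) b := by
      refine HasDerivAt.sub (HasDerivAt.sub ?_ ?_) ?_
      · exact hVd2.hasFDerivAt.comp_hasDerivAt b
          ((hasDerivAt_const b a).prodMk (hasDerivAt_id b))
      · exact hasDerivAt_const b (0 : ℝ)
      · exact (((((hasDerivAt_id b).const_mul c).sinh).mul_const (c * 1)).add
          (hasDerivAt_const b (0 : ℝ))).const_mul ε
    have hdq : HasDerivAt (deriv (fun s => g (a, s)))
        (fderiv ℝ (fun y => fderiv ℝ v y ((0 : ℝ), (1 : ℝ))) (a, b) ((0 : ℝ), (1 : ℝ)) - 0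
          - ε * (Real.cosh (c * b) * (c * 1) * (c * 1) + 0)) b :=
      hE2.congr_of_eventuallyEq hq'
    have hqmax : IsLocalMax (fun s => g (a, s)) b := by
      filter_upwards [hev2] with t ht
      exact hmax (a, t) ⟨⟨le_of_lt ht.1.1, le_of_lt ht.1.2⟩, ⟨le_of_lt ht.2.1, le_of_lt ht.2.2⟩⟩
    have hqdiff : ∀ᶠ t in 𝓝 b, DifferentiableAt ℝ (fun s => g (a, s)) t := by
      filter_upwards [hev2] with t ht
      exact (hslice2 t ht).differentiableAt
    have hd2 := second_deriv_nonpos_of_isLocalMax hqmax hqdiff hdq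
    -- combine
    have hlap := hsub (a, b) hxU
    simp only [lap2] at hlap
    have hgval : g (a, b) = v (a, b) - (r / K) * Real.cosh (c * (μ * R - a))
        - ε * (Real.cosh (c * b) + Real.cosh (c * (a - η * R))) := by rw [hg]
    have hpos : 0 < c ^ 2 * g (a, b) := mul_pos (pow_pos hc 2) hg0
    rw [hgval] at hpos
    nlinarith [hd1, hd2, hlap, hpos]
  -- conclude
  intro x hx
  by_contra hlt
  push_neg at hlt
  have hM0 : 0 < Real.cosh (c * x.2) + Real.cosh (c * (x.1 - η * R)) := by positivity
  have hδ0 : 0 < v x - r * Real.cosh (c * (μ * R - x.1)) / K := sub_pos.2 hlt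
  set ε := (v x - r * Real.cosh (c * (μ * R - x.1)) / K) /
    (2 * (Real.cosh (c * x.2) + Real.cosh (c * (x.1 - η * R)))) with hε
  have hε0 : 0 < ε := by rw [hε]; exact div_pos hδ0 (by positivity)
  have hkey : v x - (r / K) * Real.cosh (c * (μ * R - x.1))
      - ε * (Real.cosh (c * x.2) + Real.cosh (c * (x.1 - η * R))) ≤ 0 :=
    key ε hε0 _ rfl x hx
  have h1 : (r / K) * Real.cosh (c * (μ * R - x.1))
      = r * Real.cosh (c * (μ * R - x.1)) / K := by ring
  have h2 : ε * (Real.cosh (c * x.2) + Real.cosh (c * (x.1 - η * R)))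
      = (v x - r * Real.cosh (c * (μ * R - x.1)) / K) / 2 := by
    rw [hε, div_mul_eq_mul_div]
    exact mul_div_mul_right _ _ (ne_of_gt hM0)
  linarith [hkey, hδ0]
end
end

section
/- Let c > 0, r > 0, R ≥ 1, s ∈ ℝ, and let S = [s, ∞) × [−R, R]. Suppose v : S → ℝ is continuous and bounded above, C² in the interior of S, admits one-sided normal derivatives on the lateral edges, and satisfies: Δv ≥ c² v in the interior of S; v(s, x₂) ≤ r for all x₂ ∈ [−R, R]; and ∂v/∂x₂(x₁, R) ≤ 0 and ∂v/∂x₂(x₁, −R) ≥ 0 for all x₁ > s. Then for every (x₁, x₂) ∈ S, v(x₁, x₂) ≤ r · e^{−c(x₁ − s)}. -/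
open Set Filter

noncomputable section

lemma secondDeriv_nonpos_of_isLocalMax {g : ℝ → ℝ} {a m : ℝ}
    (hg : ∀ᶠ x in nhds a, DifferentiableAt ℝ g x)
    (h2 : HasDerivAt (deriv g) m a) (hmax : IsLocalMax g a) : m ≤ 0 := by
  by_contra hm
  push_neg at hm
  have hda : deriv g a = 0 := hmax.deriv_eq_zero
  have hslope : Tendsto (slope (deriv g) a) (nhdsWithin a {a}ᶜ) (nhds m) :=
    hasDerivAt_iff_tendsto_slope.1 h2
  have hev : ∀ᶠ x in nhdsWithin a (Ioi a), 0 < deriv g x := by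
    have h1 : ∀ᶠ x in nhdsWithin a {a}ᶜ, 0 < slope (deriv g) a x :=
      hslope.eventually (eventually_gt_nhds hm)
    have h2' : ∀ᶠ x in nhdsWithin a (Ioi a), 0 < slope (deriv g) a x :=
      h1.filter_mono (nhdsWithin_mono a fun x hx => ne_of_gt hx)
    filter_upwards [h2', self_mem_nhdsWithin] with x hx hx'
    have hxa : 0 < x - a := sub_pos.2 hx'
    have hs : slope (deriv g) a x = deriv g x / (x - a) := by
      simp [slope, hda, div_eq_inv_mul]
    rw [hs] at hx
    have : deriv g x = deriv g x / (x - a) * (x - a) := (div_mul_cancel₀ _ hxa.ne').symm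
    rw [this]; positivity
  have hdiff : ∀ᶠ x in nhdsWithin a (Ioi a), DifferentiableAt ℝ g x :=
    hg.filter_mono nhdsWithin_le_nhds
  have hle : ∀ᶠ x in nhdsWithin a (Ioi a), g x ≤ g a :=
    hmax.filter_mono nhdsWithin_le_nhds
  obtain ⟨u, hu, hprop⟩ := (hev.and (hdiff.and hle)).exists_mem
  obtain ⟨b, hb, hbsub⟩ := mem_nhdsGT_iff_exists_Ioc_subset.1 hu
  have hmono : StrictMonoOn g (Icc a b) := by
    apply strictMonoOn_of_deriv_pos (convex_Icc a b)
    · intro x hx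
      rcases eq_or_lt_of_le hx.1 with h | h
      · subst h; exact hg.self_of_nhds.continuousAt.continuousWithinAt
      · exact ((hprop x (hbsub ⟨h, hx.2⟩)).2.1).continuousAt.continuousWithinAt
    · intro x hx
      rw [interior_Icc] at hx
      exact (hprop x (hbsub ⟨hx.1, le_of_lt hx.2⟩)).1
  have : g a < g b := hmono (left_mem_Icc.2 hb.le) (right_mem_Icc.2 hb.le) hb
  exact absurd (hprop b (hbsub ⟨hb, le_refl b⟩)).2.2 (not_le.2 this)

lemma line_secondDeriv {u : ℝ × ℝ → ℝ} {p e : ℝ × ℝ}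
    (hv : ∀ᶠ y in nhds p, DifferentiableAt ℝ u y)
    (hF : DifferentiableAt ℝ (fun y => fderiv ℝ u y e) p) :
    (∀ᶠ t in nhds (0:ℝ), DifferentiableAt ℝ (fun t : ℝ => u (p + t • e)) t) ∧
    HasDerivAt (deriv (fun t : ℝ => u (p + t • e))) (fderiv ℝ (fun y => fderiv ℝ u y e) p e) 0 := by
  have hL : ∀ t : ℝ, HasDerivAt (fun t : ℝ => p + t • e) e t := by
    intro t
    simpa using ((hasDerivAt_id t).smul_const e).const_add p
  have htend : Tendsto (fun t : ℝ => p + t • e) (nhds 0) (nhds p) := by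
    have := (hL 0).continuousAt.tendsto
    simpa using this
  have hev : ∀ᶠ t : ℝ in nhds 0, DifferentiableAt ℝ u (p + t • e) := htend.eventually hv
  have hkey : ∀ᶠ t : ℝ in nhds 0, HasDerivAt (fun t : ℝ => u (p + t • e))
      (fderiv ℝ u (p + t • e) e) t := by
    filter_upwards [hev] with t ht
    exact ht.hasFDerivAt.comp_hasDerivAt t (hL t)
  constructor
  · filter_upwards [hkey] with t ht using ht.differentiableAt
  · have heq : deriv (fun t : ℝ => u (p + t • e)) =ᶠ[nhds (0:ℝ)]
        fun t => fderiv ℝ u (p + t • e) e := by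
      filter_upwards [hkey] with t ht using ht.deriv
    rw [heq.hasDerivAt_iff]
    have h0 : p + (0:ℝ) • e = p := by simp
    have hF' : HasFDerivAt (fun y => fderiv ℝ u y e)
        (fderiv ℝ (fun y => fderiv ℝ u y e) p) (p + (0:ℝ) • e) := by
      rw [h0]; exact hF.hasFDerivAt
    exact hF'.comp_hasDerivAt 0 (hL 0)

lemma hasDerivAt_exp_affine (a b t : ℝ) :
    HasDerivAt (fun t : ℝ => Real.exp (a * t + b)) (a * Real.exp (a * t + b)) t := by
  have h : HasDerivAt (fun t : ℝ => a * t + b) a t := by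
    simpa using ((hasDerivAt_id t).const_mul a).add_const b
  simpa [mul_comm, Function.comp_def] using (Real.hasDerivAt_exp (a * t + b)).comp t h

lemma hasDerivAt_cosh_affine (a b t : ℝ) :
    HasDerivAt (fun t : ℝ => Real.cosh (a * t + b)) (a * Real.sinh (a * t + b)) t := by
  have h : HasDerivAt (fun t : ℝ => a * t + b) a t := by
    simpa using ((hasDerivAt_id t).const_mul a).add_const b
  simpa [mul_comm, Function.comp_def] using (Real.hasDerivAt_cosh (a * t + b)).comp t h

lemma hasDerivAt_sinh_affine (a b t : ℝ) :
    HasDerivAt (fun t : ℝ => Real.sinh (a * t + b)) (a * Real.cosh (a * t + b)) t := by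
  have h : HasDerivAt (fun t : ℝ => a * t + b) a t := by
    simpa using ((hasDerivAt_id t).const_mul a).add_const b
  simpa [mul_comm, Function.comp_def] using (Real.hasDerivAt_sinh (a * t + b)).comp t h

/-- Exponential comparison estimate on the half-strip
`S = [s, ∞) × [−R, R]`: if `v` is continuous and bounded above on `S`, `Δv ≥ c²v` in
the interior, `v ≤ r` on the left edge, and the outward normal derivative of `v` is
nonpositive on the two horizontal edges, then `v(x₁,x₂) ≤ r e^{−c(x₁ − s)}` on `S`. -/
theorem exp_comparison_halfstrip (c r R s : ℝ)
    (hc : 0 < c) (hr : 0 < r) (hR : 1 ≤ R)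
    (v : ℝ × ℝ → ℝ)
    (hcont : ContinuousOn v (Ici s ×ˢ Icc (-R) R))
    (hbdd : ∃ M : ℝ, ∀ x ∈ Ici s ×ˢ Icc (-R) R, v x ≤ M)
    (hC2 : ContDiffOn ℝ 2 v (Ioi s ×ˢ Ioo (-R) R))
    (hsub : ∀ x ∈ Ioi s ×ˢ Ioo (-R) R, c ^ 2 * v x ≤ lap2 v x)
    (hleft : ∀ x₂ ∈ Icc (-R) R, v (s, x₂) ≤ r)
    (htop : ∀ x₁ ∈ Ioi s,
      DifferentiableWithinAt ℝ (fun t => v (x₁, t)) (Iic R) R ∧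
      derivWithin (fun t => v (x₁, t)) (Iic R) R ≤ 0)
    (hbot : ∀ x₁ ∈ Ioi s,
      DifferentiableWithinAt ℝ (fun t => v (x₁, t)) (Ici (-R)) (-R) ∧
      0 ≤ derivWithin (fun t => v (x₁, t)) (Ici (-R)) (-R)) :
    ∀ x ∈ Ici s ×ˢ Icc (-R) R, v x ≤ r * Real.exp (-c * (x.1 - s)) := by
  obtain ⟨M, hM⟩ := hbdd
  have key : ∀ ε : ℝ, 0 < ε → ∀ x ∈ Ici s ×ˢ Icc (-R) R,
      v x ≤ r * Real.exp (-c * (x.1 - s)) +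
        ε * (Real.exp (c * (x.1 - s)) + Real.cosh (c * x.2)) := by
    intro ε hε x hx
    -- choose the truncation point T
    obtain ⟨T, hTx, hTM⟩ : ∃ T : ℝ, x.1 ≤ T ∧ M ≤ ε * Real.exp (c * (T - s)) := by
      have h1 : Tendsto (fun T : ℝ => c * (T - s)) atTop atTop :=
        (tendsto_atTop_add_const_right _ (-s) tendsto_id).const_mul_atTop hc
      have h2 : Tendsto (fun T : ℝ => ε * Real.exp (c * (T - s))) atTop atTop :=
        (Real.tendsto_exp_atTop.comp h1).const_mul_atTop hε
      obtain ⟨T, hT1, hT2⟩ := ((eventually_ge_atTop x.1).and (h2.eventually_ge_atTop M)).exists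
      exact ⟨T, hT1, hT2⟩
    set w : ℝ × ℝ → ℝ := fun y => r * Real.exp (-c * (y.1 - s)) +
        ε * (Real.exp (c * (y.1 - s)) + Real.cosh (c * y.2)) with hw
    set u : ℝ × ℝ → ℝ := fun y => v y - w y with hudef
    show v x ≤ w x
    have hKS : Icc s T ×ˢ Icc (-R) R ⊆ Ici s ×ˢ Icc (-R) R :=
      prod_mono Icc_subset_Ici_self subset_rfl
    have hxK : x ∈ Icc s T ×ˢ Icc (-R) R := ⟨⟨hx.1, hTx⟩, hx.2⟩
    have hwc : Continuous w := by
      rw [hw]; fun_prop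
    have hucont : ContinuousOn u (Icc s T ×ˢ Icc (-R) R) :=
      (hcont.mono hKS).sub hwc.continuousOn
    obtain ⟨p, hpK, hpmax⟩ := (isCompact_Icc.prod isCompact_Icc).exists_isMaxOn
      ⟨x, hxK⟩ hucont
    have hux : u x ≤ u p := hpmax hxK
    suffices h : u p ≤ 0 by
      have : u x ≤ 0 := le_trans hux h
      simpa [hudef] using this
    by_contra hpos
    push_neg at hpos
    obtain ⟨⟨hps, hpT⟩, hp2⟩ := hpK
    have hcoshp : 1 ≤ Real.cosh (c * p.2) := Real.one_le_cosh _
    -- p is not on the left edge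
    have hp1s : s < p.1 := by
      rcases eq_or_lt_of_le hps with h | h
      · exfalso
        have hv1 : v p ≤ r := by
          have h2 := hleft p.2 hp2
          rwa [h, Prod.mk.eta] at h2
        have hwp : r + ε * 1 ≤ w p := by
          have : Real.exp (-c * (p.1 - s)) = 1 := by rw [← h]; simp
          rw [hw]
          simp only [this]
          have h2 : Real.exp (c * (p.1 - s)) = 1 := by rw [← h]; simp
          rw [h2]
          nlinarith
        have : u p ≤ -ε := by simp only [hudef]; nlinarith
        linarith
      · exact h
    -- p is not on the right (truncation) edge
    have hp1T : p.1 < T := by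
      rcases eq_or_lt_of_le hpT with h | h
      · exfalso
        have hv1 : v p ≤ M := hM p (hKS ⟨⟨hps, hpT⟩, hp2⟩)
        have hwp : M ≤ w p - r * Real.exp (-c * (p.1 - s)) - ε * 1 := by
          rw [hw]
          simp only [h]
          nlinarith [hTM, Real.exp_pos (-c * (T - s))]
        have : u p ≤ 0 := by
          simp only [hudef]
          nlinarith [Real.exp_pos (-c * (p.1 - s))]
        linarith
      · exact h
    -- case analysis on p.2
    rcases eq_or_lt_of_le hp2.2 with htopc | hlt2
    · -- top edge : p.2 = R
      exfalso
      have hp1s' : p.1 ∈ Ioi s := hp1s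
      obtain ⟨hvd, hvd2⟩ := htop p.1 hp1s'
      -- the function t ↦ u (p.1, t)
      have hweq : (fun t : ℝ => w (p.1, t)) = fun t : ℝ =>
          ε * (Real.cosh (c * t + 0) + Real.exp (c * (p.1 - s))) +
            r * Real.exp (-c * (p.1 - s)) := by
        funext t; rw [hw]; ring_nf
      have hwd : HasDerivAt (fun t : ℝ => w (p.1, t))
          (ε * (c * Real.sinh (c * R + 0))) R := by
        rw [hweq]
        exact (((hasDerivAt_cosh_affine c 0 R).add_const
          (Real.exp (c * (p.1 - s)))).const_mul ε).add_const (r * Real.exp (-c * (p.1 - s)))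
      have hd : HasDerivWithinAt (fun t : ℝ => u (p.1, t))
          (derivWithin (fun t => v (p.1, t)) (Iic R) R - ε * (c * Real.sinh (c * R + 0)))
          (Icc (-R) R) R := by
        exact ((hvd.hasDerivWithinAt.mono Icc_subset_Iic_self).sub
          (hwd.hasDerivWithinAt))
      have hmaxE : IsMaxOn (fun t : ℝ => u (p.1, t)) (Icc (-R) R) R := by
        intro t ht
        have h1 : u (p.1, t) ≤ u p := hpmax ⟨⟨hps, hpT⟩, ht⟩
        have h2 : u p = u (p.1, R) := by rw [← htopc]
        simp only [mem_setOf_eq]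
        rw [← h2]; exact h1
      have hmem : (-1 : ℝ) ∈ posTangentConeAt (Icc (-R) R) R := by
        apply mem_posTangentConeAt_of_segment_subset
        have harr : R + (-1) = R - 1 := by ring
        rw [segment_symm, harr, segment_eq_Icc (by linarith : R - 1 ≤ R)]
        exact Icc_subset_Icc (by linarith) le_rfl
      have hnonpos := hmaxE.localize.hasFDerivWithinAt_nonpos hd.hasFDerivWithinAt hmem
      simp only [ContinuousLinearMap.toSpanSingleton_apply,
        smul_eq_mul] at hnonpos
      have hsinh : 0 < Real.sinh (c * R + 0) := by
        rw [Real.sinh_pos_iff]; positivity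
      nlinarith [mul_pos hε (mul_pos hc hsinh)]
    rcases eq_or_lt_of_le hp2.1 with hbotc | hgt2
    · -- bottom edge : p.2 = -R
      exfalso
      have hp1s' : p.1 ∈ Ioi s := hp1s
      obtain ⟨hvd, hvd2⟩ := hbot p.1 hp1s'
      have hweq : (fun t : ℝ => w (p.1, t)) = fun t : ℝ =>
          ε * (Real.cosh (c * t + 0) + Real.exp (c * (p.1 - s))) +
            r * Real.exp (-c * (p.1 - s)) := by
        funext t; rw [hw]; ring_nf
      have hwd : HasDerivAt (fun t : ℝ => w (p.1, t))
          (ε * (c * Real.sinh (c * (-R) + 0))) (-R) := by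
        rw [hweq]
        exact (((hasDerivAt_cosh_affine c 0 (-R)).add_const
          (Real.exp (c * (p.1 - s)))).const_mul ε).add_const (r * Real.exp (-c * (p.1 - s)))
      have hd : HasDerivWithinAt (fun t : ℝ => u (p.1, t))
          (derivWithin (fun t => v (p.1, t)) (Ici (-R)) (-R) - ε * (c * Real.sinh (c * (-R) + 0)))
          (Icc (-R) R) (-R) := by
        exact ((hvd.hasDerivWithinAt.mono Icc_subset_Ici_self).sub
          (hwd.hasDerivWithinAt))
      have hmaxE : IsMaxOn (fun t : ℝ => u (p.1, t)) (Icc (-R) R) (-R) := by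
        intro t ht
        have h1 : u (p.1, t) ≤ u p := hpmax ⟨⟨hps, hpT⟩, ht⟩
        have h2 : u p = u (p.1, -R) := by rw [hbotc]
        simp only [mem_setOf_eq]
        rw [← h2]; exact h1
      have hmem : (1 : ℝ) ∈ posTangentConeAt (Icc (-R) R) (-R) := by
        apply mem_posTangentConeAt_of_segment_subset
        rw [segment_eq_Icc (by linarith : -R ≤ -R + 1)]
        exact Icc_subset_Icc le_rfl (by linarith)
      have hnonpos := hmaxE.localize.hasFDerivWithinAt_nonpos hd.hasFDerivWithinAt hmem
      simp only [ContinuousLinearMap.toSpanSingleton_apply,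
        smul_eq_mul] at hnonpos
      have hsinh : Real.sinh (c * (-R) + 0) < 0 := by
        have hlt : c * (-R) + 0 < 0 := by nlinarith
        simpa using Real.sinh_lt_sinh.2 hlt
      nlinarith [mul_pos hε (mul_pos hc (neg_pos.2 hsinh))]
    · -- interior case
      exfalso
      have hpO : p ∈ Ioi s ×ˢ Ioo (-R) R := ⟨hp1s, hgt2, hlt2⟩
      have hopen : IsOpen (Ioi s ×ˢ Ioo (-R) R : Set (ℝ × ℝ)) := isOpen_Ioi.prod isOpen_Ioo
      have hC2at : ContDiffAt ℝ 2 v p := hC2.contDiffAt (hopen.mem_nhds hpO)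
      have hvdiff_ev : ∀ᶠ y in nhds p, DifferentiableAt ℝ v y := by
        filter_upwards [hC2at.eventually (by norm_num)] with y hy
        exact hy.differentiableAt (by norm_num)
      have hKn : Icc s T ×ˢ Icc (-R) R ∈ nhds p := by
        apply mem_of_superset ((isOpen_Ioo.prod isOpen_Ioo).mem_nhds
          (⟨⟨hp1s, hp1T⟩, hgt2, hlt2⟩ : p ∈ Ioo s T ×ˢ Ioo (-R) R))
        exact prod_mono Ioo_subset_Icc_self Ioo_subset_Icc_self
      have hulocmax : IsLocalMax u p := hpmax.isLocalMax hKn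
      -- generic second-derivative bound along a direction
      have main : ∀ (e : ℝ × ℝ) (W' : ℝ → ℝ) (m : ℝ),
          (∀ t : ℝ, HasDerivAt (fun t : ℝ => w (p + t • e)) (W' t) t) →
          HasDerivAt W' m 0 →
          fderiv ℝ (fun y => fderiv ℝ v y e) p e ≤ m := by
        intro e W' m hW' hW''
        have hF : DifferentiableAt ℝ (fun y => fderiv ℝ v y e) p := by
          have h1 : ContDiffAt ℝ 1 (fderiv ℝ v) p :=
            hC2at.fderiv_right (by norm_num)
          exact (h1.differentiableAt one_ne_zero).clm_apply (differentiableAt_const e)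
        obtain ⟨hgv_ev, hgv2⟩ := line_secondDeriv hvdiff_ev hF
        have hgdiff : ∀ᶠ t in nhds (0:ℝ),
            DifferentiableAt ℝ (fun t : ℝ => u (p + t • e)) t := by
          filter_upwards [hgv_ev] with t ht
          exact ht.sub (hW' t).differentiableAt
        have hderiv_g : deriv (fun t : ℝ => u (p + t • e)) =ᶠ[nhds (0:ℝ)]
            fun t => deriv (fun t : ℝ => v (p + t • e)) t - W' t := by
          filter_upwards [hgv_ev] with t ht
          have : (fun t : ℝ => u (p + t • e)) =
              fun t : ℝ => v (p + t • e) - w (p + t • e) := rfl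
          rw [this, deriv_fun_sub ht (hW' t).differentiableAt, (hW' t).deriv]
        have h2 : HasDerivAt (deriv (fun t : ℝ => u (p + t • e)))
            (fderiv ℝ (fun y => fderiv ℝ v y e) p e - m) 0 := by
          rw [hderiv_g.hasDerivAt_iff]
          exact hgv2.sub hW''
        have hlm : IsLocalMax (fun t : ℝ => u (p + t • e)) 0 := by
          have htend : Tendsto (fun t : ℝ => p + t • e) (nhds 0) (nhds p) := by
            have hL : HasDerivAt (fun t : ℝ => p + t • e) e 0 := by
              simpa using ((hasDerivAt_id (0:ℝ)).smul_const e).const_add p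
            simpa using hL.continuousAt.tendsto
          have hev := htend.eventually hulocmax
          have h0 : p + (0:ℝ) • e = p := by simp
          unfold IsLocalMax IsMaxFilter
          filter_upwards [hev] with t ht
          simpa [h0] using ht
        have := secondDeriv_nonpos_of_isLocalMax hgdiff h2 hlm
        linarith
      -- direction (1,0)
      have heq1 : (fun t : ℝ => w (p + t • ((1:ℝ), (0:ℝ)))) = fun t : ℝ =>
          r * Real.exp (-c * t + -c * (p.1 - s)) +
            ε * (Real.exp (c * t + c * (p.1 - s)) + Real.cosh (c * p.2)) := by
        funext t
        rw [hw]
        simp [Prod.smul_def]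
        ring_nf
      have hW1' : ∀ t : ℝ, HasDerivAt (fun t : ℝ => w (p + t • ((1:ℝ), (0:ℝ))))
          (r * (-c * Real.exp (-c * t + -c * (p.1 - s))) +
            ε * (c * Real.exp (c * t + c * (p.1 - s)))) t := by
        intro t
        rw [heq1]
        exact ((hasDerivAt_exp_affine (-c) (-c * (p.1 - s)) t).const_mul r).add
          (((hasDerivAt_exp_affine c (c * (p.1 - s)) t).add_const
            (Real.cosh (c * p.2))).const_mul ε)
      have hW1'' : HasDerivAt (fun t : ℝ =>
          r * (-c * Real.exp (-c * t + -c * (p.1 - s))) +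
            ε * (c * Real.exp (c * t + c * (p.1 - s))))
          (r * (-c * (-c * Real.exp (-c * 0 + -c * (p.1 - s)))) +
            ε * (c * (c * Real.exp (c * 0 + c * (p.1 - s))))) 0 := by
        exact (((hasDerivAt_exp_affine (-c) (-c * (p.1 - s)) 0).const_mul (-c)).const_mul r).add
          (((hasDerivAt_exp_affine c (c * (p.1 - s)) 0).const_mul c).const_mul ε)
      have i1 := main ((1:ℝ), (0:ℝ)) _ _ hW1' hW1''
      -- direction (0,1)
      have heq2 : (fun t : ℝ => w (p + t • ((0:ℝ), (1:ℝ)))) = fun t : ℝ =>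
          ε * (Real.cosh (c * t + c * p.2) + Real.exp (c * (p.1 - s))) +
            r * Real.exp (-c * (p.1 - s)) := by
        funext t
        rw [hw]
        simp [Prod.smul_def]
        ring_nf
      have hW2' : ∀ t : ℝ, HasDerivAt (fun t : ℝ => w (p + t • ((0:ℝ), (1:ℝ))))
          (ε * (c * Real.sinh (c * t + c * p.2))) t := by
        intro t
        rw [heq2]
        exact (((hasDerivAt_cosh_affine c (c * p.2) t).add_const
          (Real.exp (c * (p.1 - s)))).const_mul ε).add_const (r * Real.exp (-c * (p.1 - s)))
      have hW2'' : HasDerivAt (fun t : ℝ => ε * (c * Real.sinh (c * t + c * p.2)))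
          (ε * (c * (c * Real.cosh (c * 0 + c * p.2)))) 0 := by
        exact ((hasDerivAt_sinh_affine c (c * p.2) 0).const_mul c).const_mul ε
      have i2 := main ((0:ℝ), (1:ℝ)) _ _ hW2' hW2''
      have hlap := hsub p hpO
      rw [lap2] at hlap
      have hsum : r * (-c * (-c * Real.exp (-c * 0 + -c * (p.1 - s)))) +
            ε * (c * (c * Real.exp (c * 0 + c * (p.1 - s)))) +
            ε * (c * (c * Real.cosh (c * 0 + c * p.2))) = c ^ 2 * w p := by
        rw [hw]
        ring_nf
      have hvw : c ^ 2 * v p ≤ c ^ 2 * w p := by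
        calc c ^ 2 * v p ≤ _ := hlap
        _ ≤ _ := add_le_add i1 i2
        _ = c ^ 2 * w p := hsum
      have hf : 0 < c ^ 2 * (v p - w p) := mul_pos (pow_pos hc 2) hpos
      nlinarith [hf, hvw]
  -- pass to the limit ε → 0⁺
  intro x hx
  by_contra hcon
  push_neg at hcon
  set C := Real.exp (c * (x.1 - s)) + Real.cosh (c * x.2) with hC
  have hCpos : 0 < C := by
    have := Real.cosh_pos (c * x.2)
    have := Real.exp_pos (c * (x.1 - s))
    positivity
  set η := v x - r * Real.exp (-c * (x.1 - s)) with hη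
  have hηpos : 0 < η := by simp only [hη]; linarith
  have hkey := key (η / (2 * C)) (by positivity) x hx
  have : η / (2 * C) * C = η / 2 := by field_simp
  rw [this] at hkey
  simp only [hη] at hkey
  linarith
end
end

section
/- Let B ≥ r > 0, θ > 0, R > 0, and let C = [0, θ] × [−R, R]. Suppose q : C → ℝ is continuous on C, C² in the interior of C, admits one-sided normal derivatives on the horizontal edges, and satisfies: Δq ≥ 0 in the interior of C; ∂q/∂x₂(x₁, R) ≤ 0 and ∂q/∂x₂(x₁, −R) ≥ 0 for all x₁ ∈ (0, θ); q(0, x₂) ≤ B and q(θ, x₂) ≤ r for all x₂ ∈ [−R, R]. Then for every (x₁, x₂) ∈ C, q(x₁, x₂) ≤ B + ((r − B)/θ) x₁. -/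
open Set Filter

noncomputable section

private lemma slope_right_max {h : ℝ → ℝ} {a b d : ℝ} (hab : a < b)
    (hd : HasDerivWithinAt h d (Iic b) b)
    (hle : ∀ t ∈ Ioo a b, h t ≤ h b) : 0 ≤ d := by
  have hs := hasDerivWithinAt_iff_tendsto_slope.1 hd
  rw [Iic_diff_right] at hs
  refine ge_of_tendsto hs ?_
  filter_upwards [Ioo_mem_nhdsLT_of_mem (⟨hab, le_refl b⟩ : b ∈ Ioc a b)] with t ht
  rw [slope_def_field]
  exact div_nonneg_iff.2 (Or.inr ⟨sub_nonpos.2 (hle t ht), by linarith [ht.2]⟩)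

private lemma slope_left_max {h : ℝ → ℝ} {a b d : ℝ} (hab : a < b)
    (hd : HasDerivWithinAt h d (Ici a) a)
    (hle : ∀ t ∈ Ioo a b, h t ≤ h a) : d ≤ 0 := by
  have hs := hasDerivWithinAt_iff_tendsto_slope.1 hd
  rw [Ici_sdiff_left] at hs
  refine le_of_tendsto hs ?_
  filter_upwards [Ioo_mem_nhdsGT_of_mem (⟨le_refl a, hab⟩ : a ∈ Ico a b)] with t ht
  rw [slope_def_field]
  exact div_nonpos_of_nonpos_of_nonneg (sub_nonpos.2 (hle t ht)) (by linarith [ht.1])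

private lemma secondDeriv_nonpos_of_isLocalMax_s8 {f : ℝ → ℝ} {a c : ℝ}
    (hmax : IsLocalMax f a)
    (hdiff : ∀ᶠ t in nhds a, DifferentiableAt ℝ f t)
    (hf'' : HasDerivAt (deriv f) c a) : c ≤ 0 := by
  by_contra hc
  push_neg at hc
  have hf' : deriv f a = 0 := hmax.deriv_eq_zero
  have hslope : Tendsto (slope (deriv f) a) (nhdsWithin a {a}ᶜ) (nhds c) :=
    hasDerivAt_iff_tendsto_slope.1 hf''
  have hslope' : Tendsto (slope (deriv f) a) (nhdsWithin a (Ioi a)) (nhds c) :=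
    hslope.mono_left (nhdsWithin_mono a fun t ht => ne_of_gt ht)
  have hev : ∀ᶠ t in nhdsWithin a (Ioi a), 0 < deriv f t := by
    filter_upwards [hslope'.eventually (eventually_gt_nhds hc), self_mem_nhdsWithin] with t hst hta
    rw [slope_def_field, hf', sub_zero] at hst
    have h2 : 0 < t - a := sub_pos.2 hta
    have := mul_pos hst h2
    rwa [div_mul_cancel₀ _ h2.ne'] at this
  obtain ⟨u, hu, hIoo⟩ := mem_nhdsGT_iff_exists_Ioo_subset.1 hev
  obtain ⟨δ, hδ, hball⟩ := Metric.eventually_nhds_iff.1 (hdiff.and hmax)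
  set b := min (a + δ/2) ((a + u)/2) with hb
  have hab : a < b := lt_min (by linarith) (by simp only [mem_Ioi] at hu; linarith)
  have hmem : ∀ t ∈ Icc a b, dist t a < δ := by
    intro t ht
    rw [Real.dist_eq, abs_lt]
    constructor
    · linarith [ht.1]
    · have : b ≤ a + δ/2 := min_le_left _ _
      linarith [ht.2]
  have hsm : StrictMonoOn f (Icc a b) := by
    apply strictMonoOn_of_deriv_pos (convex_Icc a b)
    · exact fun t ht => ((hball (hmem t ht)).1).continuousAt.continuousWithinAt
    · intro t ht
      rw [interior_Icc] at ht
      refine hIoo ⟨ht.1, ?_⟩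
      have : b ≤ (a + u)/2 := min_le_right _ _
      simp only [mem_Ioi] at hu
      linarith [ht.2]
  have h1 : f a < f b := hsm (left_mem_Icc.2 hab.le) (right_mem_Icc.2 hab.le) hab
  have h2 : f b ≤ f a := (hball (hmem b (right_mem_Icc.2 hab.le))).2
  linarith

/-- Linear barrier on the rectangle `C = [0, θ] × [−R, R]`:
if `Δq ≥ 0` in the interior, the outward normal derivative of `q` is nonpositive
on the two horizontal edges, `q ≤ B` on the left edge and `q ≤ r` on the right edge,
then `q(x₁,x₂) ≤ B + ((r − B)/θ)x₁` on `C`. -/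
theorem linear_barrier_rectangle (B r θ R : ℝ)
    (hBr : r ≤ B) (hr : 0 < r) (hθ : 0 < θ) (hR : 0 < R)
    (q : ℝ × ℝ → ℝ)
    (hcont : ContinuousOn q (Icc 0 θ ×ˢ Icc (-R) R))
    (hC2 : ContDiffOn ℝ 2 q (Ioo 0 θ ×ˢ Ioo (-R) R))
    (hsub : ∀ x ∈ Ioo 0 θ ×ˢ Ioo (-R) R, 0 ≤ lap2 q x)
    (htop : ∀ x₁ ∈ Ioo 0 θ,
      DifferentiableWithinAt ℝ (fun t => q (x₁, t)) (Iic R) R ∧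
      derivWithin (fun t => q (x₁, t)) (Iic R) R ≤ 0)
    (hbot : ∀ x₁ ∈ Ioo 0 θ,
      DifferentiableWithinAt ℝ (fun t => q (x₁, t)) (Ici (-R)) (-R) ∧
      0 ≤ derivWithin (fun t => q (x₁, t)) (Ici (-R)) (-R))
    (hleft : ∀ x₂ ∈ Icc (-R) R, q (0, x₂) ≤ B)
    (hright : ∀ x₂ ∈ Icc (-R) R, q (θ, x₂) ≤ r) :
    ∀ x ∈ Icc 0 θ ×ˢ Icc (-R) R, q x ≤ B + ((r - B) / θ) * x.1 := by
  intro x hx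
  set s : ℝ := (r - B) / θ with hs
  have key : ∀ ε : ℝ, 0 < ε → q x - (B + s * x.1) ≤ ε * (θ^2 + R^2) := by
    intro ε hε
    set w : ℝ × ℝ → ℝ := fun y => q y - (B + s * y.1) + ε * y.1 ^ 2 - ε / 2 * y.2 ^ 2 with hw
    have hK : IsCompact (Icc (0:ℝ) θ ×ˢ Icc (-R) R) := isCompact_Icc.prod isCompact_Icc
    have hwcont : ContinuousOn w (Icc (0:ℝ) θ ×ˢ Icc (-R) R) := by
      rw [hw]
      exact ((hcont.sub (by fun_prop)).add (by fun_prop)).sub (by fun_prop)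
    obtain ⟨p, hpK, hpmax⟩ := hK.exists_isMaxOn ⟨x, hx⟩ hwcont
    have hwp : w p ≤ ε * θ^2 := by
      obtain ⟨hp1, hp2⟩ := hpK
      rcases eq_or_lt_of_le hp1.1 with h0 | h0
      · -- left edge: p.1 = 0
        have hpe : p = ((0:ℝ), p.2) := by
          rw [Prod.ext_iff]; exact ⟨h0.symm, rfl⟩
        have hq := hleft p.2 hp2
        rw [hpe, hw]
        simp only
        nlinarith [mul_nonneg hε.le (sq_nonneg p.2), mul_nonneg hε.le (sq_nonneg θ)]
      rcases eq_or_lt_of_le hp1.2 with hθe | hθe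
      · -- right edge: p.1 = θ
        have hpe : p = (θ, p.2) := by
          rw [Prod.ext_iff]; exact ⟨hθe, rfl⟩
        have hq := hright p.2 hp2
        have hsθ : s * θ = r - B := div_mul_cancel₀ _ hθ.ne'
        rw [hpe, hw]
        simp only
        nlinarith [mul_nonneg hε.le (sq_nonneg p.2)]
      · -- p.1 ∈ Ioo 0 θ
        exfalso
        have hp1I : p.1 ∈ Ioo 0 θ := ⟨h0, hθe⟩
        rcases eq_or_lt_of_le hp2.2 with hRe | hRe
        · -- p.2 = R (top edge)
          obtain ⟨hdq, hdq0⟩ := htop p.1 hp1I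
          have hpe : p = (p.1, R) := by rw [Prod.ext_iff]; exact ⟨rfl, hRe⟩
          have hpoly : HasDerivAt (fun t : ℝ => ε / 2 * t ^ 2) (ε * R) R := by
            have h := (hasDerivAt_pow 2 R).const_mul (ε/2)
            refine h.congr_deriv ?_
            push_cast; ring
          have hh : HasDerivWithinAt (fun t => w (p.1, t))
              (derivWithin (fun t => q (p.1, t)) (Iic R) R - ε * R) (Iic R) R := by
            have h1 := ((hdq.hasDerivWithinAt.sub_const (B + s * p.1)).add_const
              (ε * p.1 ^ 2)).sub hpoly.hasDerivWithinAt
            rw [hw]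
            exact h1
          have hle : ∀ t ∈ Ioo (-R) R, w (p.1, t) ≤ w (p.1, R) := by
            intro t ht
            have h1 : ((p.1 : ℝ), t) ∈ Icc (0:ℝ) θ ×ˢ Icc (-R) R :=
              ⟨Ioo_subset_Icc_self hp1I, Ioo_subset_Icc_self ht⟩
            exact le_of_le_of_eq (hpmax h1) (congrArg w hpe)
          have hfin := slope_right_max (by linarith : -R < R) hh hle
          nlinarith [mul_pos hε hR]
        rcases eq_or_lt_of_le hp2.1 with hmRe | hmRe
        · -- p.2 = -R (bottom edge)
          obtain ⟨hdq, hdq0⟩ := hbot p.1 hp1I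
          have hpe : p = (p.1, -R) := by rw [Prod.ext_iff]; exact ⟨rfl, hmRe.symm⟩
          have hpoly : HasDerivAt (fun t : ℝ => ε / 2 * t ^ 2) (-(ε * R)) (-R) := by
            have h := (hasDerivAt_pow 2 (-R)).const_mul (ε/2)
            refine h.congr_deriv ?_
            push_cast; ring
          have hh : HasDerivWithinAt (fun t => w (p.1, t))
              (derivWithin (fun t => q (p.1, t)) (Ici (-R)) (-R) - -(ε * R)) (Ici (-R)) (-R) := by
            have h1 := ((hdq.hasDerivWithinAt.sub_const (B + s * p.1)).add_const
              (ε * p.1 ^ 2)).sub hpoly.hasDerivWithinAt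
            rw [hw]
            exact h1
          have hle : ∀ t ∈ Ioo (-R) R, w (p.1, t) ≤ w (p.1, -R) := by
            intro t ht
            have h1 : ((p.1 : ℝ), t) ∈ Icc (0:ℝ) θ ×ˢ Icc (-R) R :=
              ⟨Ioo_subset_Icc_self hp1I, Ioo_subset_Icc_self ht⟩
            exact le_of_le_of_eq (hpmax h1) (congrArg w hpe)
          have hfin := slope_left_max (by linarith : -R < R) hh hle
          nlinarith [mul_pos hε hR]
        · -- interior
          have hpS : p ∈ Ioo (0:ℝ) θ ×ˢ Ioo (-R) R := ⟨hp1I, ⟨hmRe, hRe⟩⟩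
          have hSopen : IsOpen (Ioo (0:ℝ) θ ×ˢ Ioo (-R) R) := isOpen_Ioo.prod isOpen_Ioo
          have hqd : ∀ y ∈ Ioo (0:ℝ) θ ×ˢ Ioo (-R) R, DifferentiableAt ℝ q y := fun y hy =>
            (hC2.differentiableOn (by norm_num)).differentiableAt (hSopen.mem_nhds hy)
          have hfd : DifferentiableOn ℝ (fderiv ℝ q) (Ioo (0:ℝ) θ ×ˢ Ioo (-R) R) :=
            (hC2.fderiv_of_isOpen (m := 1) hSopen (by norm_num)).differentiableOn (by norm_num)
          have hfdp : DifferentiableAt ℝ (fderiv ℝ q) p :=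
            (hfd p hpS).differentiableAt (hSopen.mem_nhds hpS)
          have hg1 : DifferentiableAt ℝ (fun y => fderiv ℝ q y ((1:ℝ), (0:ℝ))) p :=
            hfdp.clm_apply (differentiableAt_const _)
          have hg2 : DifferentiableAt ℝ (fun y => fderiv ℝ q y ((0:ℝ), (1:ℝ))) p :=
            hfdp.clm_apply (differentiableAt_const _)
          have hKmem : (Icc (0:ℝ) θ ×ˢ Icc (-R) R) ∈ nhds p :=
            Filter.mem_of_superset (hSopen.mem_nhds hpS)
              (prod_mono Ioo_subset_Icc_self Ioo_subset_Icc_self)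
          have hlm : IsLocalMax w p := hpmax.isLocalMax hKmem
          have hc1 : fderiv ℝ (fun y => fderiv ℝ q y ((1:ℝ), (0:ℝ))) p (1, 0) + 2 * ε ≤ 0 := by
            have hφ : ∀ t : ℝ, HasDerivAt (fun u : ℝ => (p.1 + u, p.2)) ((1:ℝ), (0:ℝ)) t := fun t =>
              ((hasDerivAt_id t).const_add p.1).prodMk (hasDerivAt_const t p.2)
            have hev : ∀ᶠ t in nhds 0, (p.1 + t, p.2) ∈ Ioo (0:ℝ) θ ×ˢ Ioo (-R) R := by
              have hc := (hφ 0).continuousAt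
              exact hc.eventually_mem (by simpa using hSopen.mem_nhds hpS)
            have hf' : ∀ t : ℝ, (p.1 + t, p.2) ∈ Ioo (0:ℝ) θ ×ˢ Ioo (-R) R →
                HasDerivAt (fun u => w (p.1 + u, p.2))
                  (fderiv ℝ q (p.1 + t, p.2) ((1:ℝ), (0:ℝ)) - s + 2 * ε * (p.1 + t)) t := by
              intro t ht
              have h1 : HasDerivAt (fun u : ℝ => q (p.1 + u, p.2))
                  (fderiv ℝ q (p.1 + t, p.2) ((1:ℝ), (0:ℝ))) t :=
                (hqd _ ht).hasFDerivAt.comp_hasDerivAt t (hφ t)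
              have h2 : HasDerivAt (fun u : ℝ => B + s * (p.1 + u)) s t := by
                simpa using (((hasDerivAt_id t).const_add p.1).const_mul s).const_add B
              have h3 : HasDerivAt (fun u : ℝ => ε * (p.1 + u) ^ 2) (2 * ε * (p.1 + t)) t := by
                have h := (((hasDerivAt_id t).const_add p.1).pow 2).const_mul ε
                refine h.congr_deriv ?_
                simp only [id]; push_cast; ring
              have h4 := ((h1.sub h2).add h3).sub_const (ε / 2 * p.2 ^ 2)
              rw [hw]
              exact h4
            have hder : deriv (fun u => w (p.1 + u, p.2)) =ᶠ[nhds 0]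
                fun t => fderiv ℝ q (p.1 + t, p.2) ((1:ℝ), (0:ℝ)) - s + 2 * ε * (p.1 + t) :=
              hev.mono fun t ht => (hf' t ht).deriv
            have hg1' : HasDerivAt (fun t : ℝ => fderiv ℝ q (p.1 + t, p.2) ((1:ℝ), (0:ℝ)))
                (fderiv ℝ (fun y => fderiv ℝ q y ((1:ℝ), (0:ℝ))) p (1, 0)) 0 := by
              have hg1'' : DifferentiableAt ℝ (fun y => fderiv ℝ q y ((1:ℝ), (0:ℝ)))
                  ((p.1 + 0, p.2)) := by simpa using hg1
              have h := hg1''.hasFDerivAt.comp_hasDerivAt 0 (hφ 0)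
              simpa [Function.comp_def] using h
            have hD : HasDerivAt
                (fun t : ℝ => fderiv ℝ q (p.1 + t, p.2) ((1:ℝ), (0:ℝ)) - s + 2 * ε * (p.1 + t))
                (fderiv ℝ (fun y => fderiv ℝ q y ((1:ℝ), (0:ℝ))) p (1, 0) + 2 * ε) 0 := by
              have h5 : HasDerivAt (fun t : ℝ => 2 * ε * (p.1 + t)) (2 * ε) 0 := by
                simpa using ((hasDerivAt_id (0:ℝ)).const_add p.1).const_mul (2 * ε)
              exact (hg1'.sub_const s).add h5
            have hD' : HasDerivAt (deriv (fun u => w (p.1 + u, p.2)))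
                (fderiv ℝ (fun y => fderiv ℝ q y ((1:ℝ), (0:ℝ))) p (1, 0) + 2 * ε) 0 :=
              hD.congr_of_eventuallyEq hder
            have hlmf : IsLocalMax (fun u => w (p.1 + u, p.2)) 0 := by
              have htend : Filter.Tendsto (fun u : ℝ => (p.1 + u, p.2)) (nhds 0) (nhds p) := by
                have hc := (hφ 0).continuousAt
                rw [ContinuousAt] at hc
                simpa using hc
              exact (htend.eventually hlm).mono fun t ht => by simpa using ht
            have hdiffev : ∀ᶠ t in nhds 0, DifferentiableAt ℝ (fun u => w (p.1 + u, p.2)) t :=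
              hev.mono fun t ht => (hf' t ht).differentiableAt
            exact secondDeriv_nonpos_of_isLocalMax_s8 hlmf hdiffev hD'
          have hc2 : fderiv ℝ (fun y => fderiv ℝ q y ((0:ℝ), (1:ℝ))) p (0, 1) - ε ≤ 0 := by
            have hφ : ∀ t : ℝ, HasDerivAt (fun u : ℝ => (p.1, p.2 + u)) ((0:ℝ), (1:ℝ)) t := fun t =>
              (hasDerivAt_const t p.1).prodMk ((hasDerivAt_id t).const_add p.2)
            have hev : ∀ᶠ t in nhds 0, (p.1, p.2 + t) ∈ Ioo (0:ℝ) θ ×ˢ Ioo (-R) R := by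
              have hc := (hφ 0).continuousAt
              exact hc.eventually_mem (by simpa using hSopen.mem_nhds hpS)
            have hf' : ∀ t : ℝ, (p.1, p.2 + t) ∈ Ioo (0:ℝ) θ ×ˢ Ioo (-R) R →
                HasDerivAt (fun u => w (p.1, p.2 + u))
                  (fderiv ℝ q (p.1, p.2 + t) ((0:ℝ), (1:ℝ)) - ε * (p.2 + t)) t := by
              intro t ht
              have h1 : HasDerivAt (fun u : ℝ => q (p.1, p.2 + u))
                  (fderiv ℝ q (p.1, p.2 + t) ((0:ℝ), (1:ℝ))) t :=
                (hqd _ ht).hasFDerivAt.comp_hasDerivAt t (hφ t)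
              have h3 : HasDerivAt (fun u : ℝ => ε / 2 * (p.2 + u) ^ 2) (ε * (p.2 + t)) t := by
                have h := (((hasDerivAt_id t).const_add p.2).pow 2).const_mul (ε / 2)
                refine h.congr_deriv ?_
                simp only [id]; push_cast; ring
              have h4 := ((h1.sub_const (B + s * p.1)).add_const (ε * p.1 ^ 2)).sub h3
              rw [hw]
              exact h4
            have hder : deriv (fun u => w (p.1, p.2 + u)) =ᶠ[nhds 0]
                fun t => fderiv ℝ q (p.1, p.2 + t) ((0:ℝ), (1:ℝ)) - ε * (p.2 + t) :=
              hev.mono fun t ht => (hf' t ht).deriv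
            have hg2' : HasDerivAt (fun t : ℝ => fderiv ℝ q (p.1, p.2 + t) ((0:ℝ), (1:ℝ)))
                (fderiv ℝ (fun y => fderiv ℝ q y ((0:ℝ), (1:ℝ))) p (0, 1)) 0 := by
              have hg2'' : DifferentiableAt ℝ (fun y => fderiv ℝ q y ((0:ℝ), (1:ℝ)))
                  ((p.1, p.2 + 0)) := by simpa using hg2
              have h := hg2''.hasFDerivAt.comp_hasDerivAt 0 (hφ 0)
              simpa [Function.comp_def] using h
            have hD : HasDerivAt
                (fun t : ℝ => fderiv ℝ q (p.1, p.2 + t) ((0:ℝ), (1:ℝ)) - ε * (p.2 + t))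
                (fderiv ℝ (fun y => fderiv ℝ q y ((0:ℝ), (1:ℝ))) p (0, 1) - ε) 0 := by
              have h5 : HasDerivAt (fun t : ℝ => ε * (p.2 + t)) ε 0 := by
                simpa using ((hasDerivAt_id (0:ℝ)).const_add p.2).const_mul ε
              exact hg2'.sub h5
            have hD' : HasDerivAt (deriv (fun u => w (p.1, p.2 + u)))
                (fderiv ℝ (fun y => fderiv ℝ q y ((0:ℝ), (1:ℝ))) p (0, 1) - ε) 0 :=
              hD.congr_of_eventuallyEq hder
            have hlmf : IsLocalMax (fun u => w (p.1, p.2 + u)) 0 := by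
              have htend : Filter.Tendsto (fun u : ℝ => (p.1, p.2 + u)) (nhds 0) (nhds p) := by
                have hc := (hφ 0).continuousAt
                rw [ContinuousAt] at hc
                simpa using hc
              exact (htend.eventually hlm).mono fun t ht => by simpa using ht
            have hdiffev : ∀ᶠ t in nhds 0, DifferentiableAt ℝ (fun u => w (p.1, p.2 + u)) t :=
              hev.mono fun t ht => (hf' t ht).differentiableAt
            exact secondDeriv_nonpos_of_isLocalMax_s8 hlmf hdiffev hD'
          have hlap := hsub p hpS
          unfold lap2 at hlap
          linarith
    have hxw : w x ≤ w p := hpmax hx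
    have hx2 : x.2^2 ≤ R^2 := sq_le_sq' (by linarith [hx.2.1]) hx.2.2
    rw [hw] at hxw hwp
    simp only at hxw hwp
    nlinarith [mul_nonneg hε.le (sq_nonneg x.1), mul_le_mul_of_nonneg_left hx2 (by linarith : (0:ℝ) ≤ ε/2)]
  have hfinal : q x - (B + s * x.1) ≤ 0 := by
    by_contra hpos
    push_neg at hpos
    have hden : (0:ℝ) < θ^2 + R^2 := by positivity
    have hk := key ((q x - (B + s * x.1)) / (2 * (θ^2 + R^2))) (by positivity)
    have h2 : (q x - (B + s * x.1)) / (2 * (θ^2 + R^2)) * (θ^2 + R^2) = (q x - (B + s * x.1)) / 2 := by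
      field_simp
    rw [h2] at hk
    linarith
  linarith
end
end

section
/- Let W : ℝ² → ℝ be C² with W ≥ 0, W(a^±) = 0 and ∇W(a^±) = 0, where a^± = (±a, 0), a > 0. Let e₊, e₋ : ℝ → ℝ² be C¹ maps with finite equal actions E(e₊) = E(e₋) = E_min < ∞, and suppose there exist K, k > 0 such that |e_±(t) − a⁺| + |e_±'(t)| ≤ K e^{−k t} for t ≥ 0 and |e_±(t) − a⁻| + |e_±'(t)| ≤ K e^{k t} for t ≤ 0. Define ũ : ℝ² → ℝ² by ũ(x₁, x₂) = e₊(x₁) for x₂ ≥ 1, ũ(x₁, x₂) = ((1 + x₂)/2) e₊(x₁) + ((1 − x₂)/2) e₋(x₁) for |x₂| ≤ 1, and ũ(x₁, x₂) = e₋(x₁) for x₂ ≤ −1. Then there exists a constant C, independent of R, such that for every R ≥ 1, ∫_{ℝ×(−R,R)} (½|∇ũ(x)|² + W(ũ(x))) dx ≤ 2R·E_min + C. -/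
open MeasureTheory Set
open scoped ENNReal

noncomputable section

/-- The point `(x, y) ∈ ℝ²` as an element of `E2`. -/
def pt (x y : ℝ) : E2 := WithLp.toLp 2 ![x, y]

/-- The comparison map `ũ` interpolating between the connections `e₊` (for `x₂ ≥ 1`)
and `e₋` (for `x₂ ≤ −1`). -/
def tildeu (ep em : ℝ → E2) (x : ℝ × ℝ) : E2 :=
  if 1 ≤ x.2 then ep x.1
  else if x.2 ≤ -1 then em x.1
  else ((1 + x.2) / 2) • ep x.1 + ((1 - x.2) / 2) • em x.1

/- ### Auxiliary lemmas -/

lemma lintegral_prod_left_const {s : Set ℝ} (f : ℝ → ℝ≥0∞)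
    (hf : Measurable f) :
    ∫⁻ x : ℝ × ℝ in Set.univ ×ˢ s, f x.1 = volume s * ∫⁻ t, f t := by
  rw [Measure.volume_eq_prod, ← Measure.prod_restrict, Measure.restrict_univ,
    lintegral_prod (fun z => f z.1) (hf.comp measurable_fst).aemeasurable]
  simp only [lintegral_const, Measure.restrict_apply MeasurableSet.univ, univ_inter]
  rw [lintegral_mul_const _ hf, mul_comm]

lemma lintegral_Iic_neg (f : ℝ → ℝ≥0∞) :
    ∫⁻ x in Iic (0:ℝ), f (-x) = ∫⁻ x in Ioi (0:ℝ), f x := by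
  have A : MeasurableEmbedding fun x : ℝ => -x :=
    (Homeomorph.neg ℝ).isClosedEmbedding.measurableEmbedding
  have h1 : (volume : Measure ℝ).restrict (Iic (0:ℝ))
      = Measure.map (fun x : ℝ => -x) ((volume : Measure ℝ).restrict (Ici (0:ℝ))) := by
    conv_lhs => rw [← Measure.map_neg_eq_self (volume : Measure ℝ)]
    rw [Measure.restrict_map A.measurable measurableSet_Iic]
    congr 1
    ext x
    simp
  rw [h1, A.lintegral_map]
  simp only [neg_neg]
  exact setLIntegral_congr (Ioi_ae_eq_Ici (a := (0:ℝ))).symm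

lemma quad_bound (W : E2 → ℝ) (hW : ContDiff ℝ 2 W) (p : E2) (hWp : W p = 0)
    (h' : fderiv ℝ W p = 0) (K : ℝ) (hK : 0 < K) :
    ∃ M : ℝ, 0 ≤ M ∧ ∀ u : E2, ‖u - p‖ ≤ K → W u ≤ M * ‖u - p‖ ^ 2 := by
  have hW' : ContDiff ℝ 1 (fderiv ℝ W) := hW.fderiv_right (by norm_num)
  have hW'' : Continuous (fderiv ℝ (fderiv ℝ W)) := hW'.continuous_fderiv one_ne_zero
  obtain ⟨M₂, hM₂⟩ := (isCompact_closedBall p K).exists_bound_of_continuousOn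
    (f := fderiv ℝ (fderiv ℝ W)) (by exact hW''.continuousOn)
  refine ⟨max M₂ 0, le_max_right _ _, fun u hu => ?_⟩
  set M := max M₂ 0 with hM
  have hMb : ∀ y ∈ Metric.closedBall p K, ‖fderiv ℝ (fderiv ℝ W) y‖ ≤ M :=
    fun y hy => (hM₂ y hy).trans (le_max_left _ _)
  have hWdiff : Differentiable ℝ W := hW.differentiable (by norm_num)
  have hW'diff : Differentiable ℝ (fderiv ℝ W) := hW'.differentiable one_ne_zero
  have hlip : ∀ y ∈ Metric.closedBall p K, ‖fderiv ℝ W y‖ ≤ M * ‖y - p‖ := by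
    intro y hy
    have := (convex_closedBall p K).norm_image_sub_le_of_norm_fderiv_le
      (fun x _ => hW'diff.differentiableAt) hMb (Metric.mem_closedBall_self hK.le) hy
    simpa [h'] using this
  have hu' : u ∈ Metric.closedBall p ‖u - p‖ := by
    simp [Metric.mem_closedBall, dist_eq_norm]
  have hsub : Metric.closedBall p ‖u - p‖ ⊆ Metric.closedBall p K :=
    Metric.closedBall_subset_closedBall hu
  have hb2 : ∀ y ∈ Metric.closedBall p ‖u - p‖, ‖fderiv ℝ W y‖ ≤ M * ‖u - p‖ := by
    intro y hy
    refine (hlip y (hsub hy)).trans ?_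
    have h1 : ‖y - p‖ ≤ ‖u - p‖ := by
      simpa [Metric.mem_closedBall, dist_eq_norm] using hy
    nlinarith [le_max_right M₂ 0]
  have := (convex_closedBall p ‖u - p‖).norm_image_sub_le_of_norm_fderiv_le
    (fun x _ => hWdiff.differentiableAt) hb2 (Metric.mem_closedBall_self (norm_nonneg _)) hu'
  rw [hWp, sub_zero] at this
  calc W u ≤ ‖W u‖ := le_abs_self _
    _ ≤ M * ‖u - p‖ * ‖u - p‖ := this
    _ = M * ‖u - p‖ ^ 2 := by ring

lemma le_zero_of_exp_decay {c K k : ℝ} (hk : 0 < k)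
    (h : ∀ t : ℝ, 0 ≤ t → c ≤ K * Real.exp (-(k * t))) : c ≤ 0 := by
  have h1 : Filter.Tendsto (fun t : ℝ => k * t) Filter.atTop Filter.atTop :=
    Filter.Tendsto.const_mul_atTop hk Filter.tendsto_id
  have ht : Filter.Tendsto (fun t : ℝ => K * Real.exp (-(k * t))) Filter.atTop (nhds 0) := by
    have := (Real.tendsto_exp_neg_atTop_nhds_zero.comp h1).const_mul K
    simpa using this
  exact ge_of_tendsto ht (Filter.eventually_atTop.mpr ⟨0, fun t ht' => h t ht'⟩)

lemma hasFDerivAt_comp_fst (f : ℝ → E2) (hf : ContDiff ℝ 1 f) (x : ℝ × ℝ) :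
    HasFDerivAt (fun y : ℝ × ℝ => f y.1)
      (((1 : ℝ →L[ℝ] ℝ).smulRight (deriv f x.1)).comp (ContinuousLinearMap.fst ℝ ℝ ℝ)) x :=
  ((hf.differentiable one_ne_zero x.1).hasDerivAt.hasFDerivAt).comp x hasFDerivAt_fst

lemma side_deriv_eval_p (ep em : ℝ → E2) (hep : ContDiff ℝ 1 ep)
    (x : ℝ × ℝ) (hx : 1 < x.2) :
    fderiv ℝ (tildeu ep em) x ((1:ℝ), (0:ℝ)) = deriv ep x.1 ∧
      fderiv ℝ (tildeu ep em) x ((0:ℝ), (1:ℝ)) = 0 := by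
  have heq : tildeu ep em =ᶠ[nhds x] (fun y : ℝ × ℝ => ep y.1) := by
    have hopen : IsOpen {y : ℝ × ℝ | 1 < y.2} := isOpen_lt continuous_const continuous_snd
    filter_upwards [hopen.mem_nhds hx] with y hy
    simp only [tildeu, if_pos (le_of_lt hy)]
  rw [heq.fderiv_eq, (hasFDerivAt_comp_fst ep hep x).fderiv]
  constructor <;> simp

lemma side_deriv_eval_m (ep em : ℝ → E2) (hem : ContDiff ℝ 1 em)
    (x : ℝ × ℝ) (hx : x.2 < -1) :
    fderiv ℝ (tildeu ep em) x ((1:ℝ), (0:ℝ)) = deriv em x.1 ∧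
      fderiv ℝ (tildeu ep em) x ((0:ℝ), (1:ℝ)) = 0 := by
  have heq : tildeu ep em =ᶠ[nhds x] (fun y : ℝ × ℝ => em y.1) := by
    have hopen : IsOpen {y : ℝ × ℝ | y.2 < -1} := isOpen_lt continuous_snd continuous_const
    filter_upwards [hopen.mem_nhds hx] with y hy
    have h1 : ¬ (1 ≤ y.2) := by push_neg; linarith
    simp only [tildeu, if_neg h1, if_pos (le_of_lt hy)]
  rw [heq.fderiv_eq, (hasFDerivAt_comp_fst em hem x).fderiv]
  constructor <;> simp

lemma middle_deriv_eval (ep em : ℝ → E2) (hep : ContDiff ℝ 1 ep) (hem : ContDiff ℝ 1 em)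
    (x : ℝ × ℝ) (hx1 : -1 < x.2) (hx2 : x.2 < 1) :
    fderiv ℝ (tildeu ep em) x ((1:ℝ), (0:ℝ))
        = ((1 + x.2)/2) • deriv ep x.1 + ((1 - x.2)/2) • deriv em x.1 ∧
      fderiv ℝ (tildeu ep em) x ((0:ℝ), (1:ℝ)) = (2⁻¹ : ℝ) • ep x.1 - (2⁻¹ : ℝ) • em x.1 := by
  have h1 := ((hasFDerivAt_snd (𝕜 := ℝ) (E := ℝ) (F := ℝ) (p := x)).const_add 1).mul_const
    (2⁻¹ : ℝ)
  have h2 := ((hasFDerivAt_snd (𝕜 := ℝ) (E := ℝ) (F := ℝ) (p := x)).const_sub 1).mul_const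
    (2⁻¹ : ℝ)
  have hF := (h1.smul (hasFDerivAt_comp_fst ep hep x)).add
    (h2.smul (hasFDerivAt_comp_fst em hem x))
  have heq : tildeu ep em =ᶠ[nhds x]
      (fun y : ℝ × ℝ => ((1 + y.2) * 2⁻¹) • ep y.1 + ((1 - y.2) * 2⁻¹) • em y.1) := by
    have hopen : IsOpen {y : ℝ × ℝ | -1 < y.2 ∧ y.2 < 1} :=
      (isOpen_lt continuous_const continuous_snd).inter (isOpen_lt continuous_snd continuous_const)
    filter_upwards [hopen.mem_nhds ⟨hx1, hx2⟩] with y hy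
    simp only [tildeu, if_neg (not_le.mpr hy.2), if_neg (not_le.mpr hy.1), div_eq_mul_inv]
  rw [heq.fderiv_eq, show fderiv ℝ (fun y : ℝ × ℝ => ((1 + y.2) * 2⁻¹) • ep y.1 + ((1 - y.2) * 2⁻¹) • em y.1) x = _ from hF.fderiv]
  constructor <;> (simp [ContinuousLinearMap.smulRight_apply]; try module)

set_option maxHeartbeats 2000000 in
/-- If `e₊, e₋` are `C¹` maps with equal finite actions `E_min` and
exponential convergence to `a^±`, then the energy of the interpolating comparison map
`ũ` on the strip `ℝ × (−R, R)` is at most `2R·E_min + C` with `C` independent of `R`. -/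
theorem comparison_map_energy_bound
    (W : E2 → ℝ) (hW : ContDiff ℝ 2 W) (hWnonneg : ∀ u, 0 ≤ W u)
    (a : ℝ) (ha : 0 < a)
    (hWzero : W (pt a 0) = 0 ∧ W (pt (-a) 0) = 0)
    (hWcrit : gradient W (pt a 0) = 0 ∧ gradient W (pt (-a) 0) = 0)
    (ep em : ℝ → E2) (hep : ContDiff ℝ 1 ep) (hem : ContDiff ℝ 1 em)
    (Emin : ℝ)
    (hEp : ∫⁻ t : ℝ, ENNReal.ofReal ((1 / 2) * ‖deriv ep t‖ ^ 2 + W (ep t)) =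
      ENNReal.ofReal Emin)
    (hEm : ∫⁻ t : ℝ, ENNReal.ofReal ((1 / 2) * ‖deriv em t‖ ^ 2 + W (em t)) =
      ENNReal.ofReal Emin)
    (K k : ℝ) (hK : 0 < K) (hk : 0 < k)
    (hdecayp : ∀ t : ℝ, 0 ≤ t →
      ‖ep t - pt a 0‖ + ‖deriv ep t‖ ≤ K * Real.exp (-k * t) ∧
      ‖em t - pt a 0‖ + ‖deriv em t‖ ≤ K * Real.exp (-k * t))
    (hdecaym : ∀ t : ℝ, t ≤ 0 →
      ‖ep t - pt (-a) 0‖ + ‖deriv ep t‖ ≤ K * Real.exp (k * t) ∧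
      ‖em t - pt (-a) 0‖ + ‖deriv em t‖ ≤ K * Real.exp (k * t)) :
    ∃ C : ℝ, ∀ R : ℝ, 1 ≤ R →
      ∫⁻ x in (Set.univ ×ˢ Set.Ioo (-R) R),
          ENNReal.ofReal ((1 / 2) * gradSq (tildeu ep em) x + W (tildeu ep em x)) ≤
        ENNReal.ofReal (2 * R * Emin + C) := by
  -- continuity facts
  have hWc : Continuous W := hW.continuous
  have hepc : Continuous ep := hep.continuous
  have hepd : Continuous (deriv ep) := hep.continuous_deriv le_rfl
  have hemc : Continuous em := hem.continuous
  have hemd : Continuous (deriv em) := hem.continuous_deriv le_rfl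
  -- the two wells are distinct
  have hpts : pt a 0 ≠ pt (-a) 0 := by
    intro h
    have := congrArg (fun v : E2 => v 0) h
    simp [pt] at this
    linarith
  -- `Emin` is nonnegative
  have hE0 : 0 ≤ Emin := by
    by_contra hneg
    push_neg at hneg
    have h0 : ENNReal.ofReal Emin = 0 := ENNReal.ofReal_eq_zero.mpr hneg.le
    rw [h0] at hEp
    set g : ℝ → ℝ := fun t => (1 / 2) * ‖deriv ep t‖ ^ 2 + W (ep t) with hg
    have hgc : Continuous g :=
      (continuous_const.mul ((hepd.norm).pow 2)).add (hWc.comp hepc)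
    have hgnn : ∀ t, 0 ≤ g t := fun t => by
      have h1 := hWnonneg (ep t)
      have h2 := sq_nonneg ‖deriv ep t‖
      simp only [hg]
      positivity
    have hmeas : Measurable fun t => ENNReal.ofReal (g t) :=
      ENNReal.measurable_ofReal.comp hgc.measurable
    have hae : (fun t => ENNReal.ofReal (g t)) =ᵐ[volume] 0 :=
      (lintegral_eq_zero_iff hmeas).mp hEp
    have hnull0 : volume {t : ℝ | ¬ (ENNReal.ofReal (g t) = (0:ℝ≥0∞))} = 0 := by
      have := ae_iff.mp hae
      simpa using this
    have hnull : volume {t : ℝ | 0 < g t} = 0 := by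
      refine measure_mono_null (fun t ht => ?_) hnull0
      simp only [mem_setOf_eq, ENNReal.ofReal_eq_zero, not_le]
      exact ht
    have hempty : {t : ℝ | 0 < g t} = ∅ :=
      ((isOpen_lt continuous_const hgc).measure_eq_zero_iff volume).mp hnull
    have hg0 : ∀ t, deriv ep t = 0 := by
      intro t
      have h1 : ¬ (0 < g t) := fun h => eq_empty_iff_forall_notMem.mp hempty t h
      have h2 : g t = 0 := le_antisymm (not_lt.mp h1) (hgnn t)
      have h3 := hWnonneg (ep t)
      have h4 : ‖deriv ep t‖ ^ 2 ≤ 0 := by simp only [hg] at h2; nlinarith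
      have h5 : ‖deriv ep t‖ = 0 := by nlinarith [sq_nonneg ‖deriv ep t‖, norm_nonneg (deriv ep t)]
      exact norm_eq_zero.mp h5
    have hconst : ∀ t, ep t = ep 0 :=
      fun t => is_const_of_deriv_eq_zero (hep.differentiable one_ne_zero) hg0 t 0
    have hpp : ep 0 = pt a 0 := by
      have h1 : ∀ t : ℝ, 0 ≤ t → ‖ep 0 - pt a 0‖ ≤ K * Real.exp (-(k * t)) := by
        intro t ht
        have h2 := (hdecayp t ht).1
        rw [neg_mul] at h2
        calc ‖ep 0 - pt a 0‖ = ‖ep t - pt a 0‖ := by rw [hconst t]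
          _ ≤ K * Real.exp (-(k * t)) := by linarith [norm_nonneg (deriv ep t)]
      have h2 := le_zero_of_exp_decay hk h1
      have h3 : ‖ep 0 - pt a 0‖ = 0 := le_antisymm h2 (norm_nonneg _)
      exact sub_eq_zero.mp (norm_eq_zero.mp h3)
    have hpm : ep 0 = pt (-a) 0 := by
      have h1 : ∀ t : ℝ, 0 ≤ t → ‖ep 0 - pt (-a) 0‖ ≤ K * Real.exp (-(k * t)) := by
        intro t ht
        have h2 := (hdecaym (-t) (neg_nonpos.mpr ht)).1
        rw [mul_neg, ← neg_mul] at h2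
        rw [neg_mul] at h2
        calc ‖ep 0 - pt (-a) 0‖ = ‖ep (-t) - pt (-a) 0‖ := by rw [hconst (-t)]
          _ ≤ K * Real.exp (-(k * t)) := by linarith [norm_nonneg (deriv ep (-t))]
      have h2 := le_zero_of_exp_decay hk h1
      have h3 : ‖ep 0 - pt (-a) 0‖ = 0 := le_antisymm h2 (norm_nonneg _)
      exact sub_eq_zero.mp (norm_eq_zero.mp h3)
    exact hpts (hpp ▸ hpm)
  -- the derivative of `W` vanishes at the wells
  have hfd : ∀ p : E2, gradient W p = 0 → fderiv ℝ W p = 0 := by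
    intro p hp
    unfold gradient at hp
    have := congrArg (InnerProductSpace.toDual ℝ E2) hp
    simpa using this
  obtain ⟨M₁, hM₁0, hM₁⟩ := quad_bound W hW (pt a 0) hWzero.1 (hfd _ hWcrit.1) K hK
  obtain ⟨M₂, hM₂0, hM₂⟩ := quad_bound W hW (pt (-a) 0) hWzero.2 (hfd _ hWcrit.2) K hK
  set M : ℝ := max M₁ M₂ with hM
  have hM0 : 0 ≤ M := le_trans hM₁0 (le_max_left _ _)
  set c : ℝ := (5 / 2 + M) * K ^ 2 with hcdef
  have hc0 : 0 ≤ c := by positivity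
  -- decay facts in terms of |t|
  have hDp : ∀ t : ℝ, ‖deriv ep t‖ ≤ K * Real.exp (-(k * |t|)) := by
    intro t
    rcases le_total 0 t with ht | ht
    · have h1 := (hdecayp t ht).1
      rw [abs_of_nonneg ht]
      rw [neg_mul] at h1
      linarith [norm_nonneg (ep t - pt a 0)]
    · have h1 := (hdecaym t ht).1
      rw [abs_of_nonpos ht]
      have he : k * t = -(k * -t) := by ring
      rw [he] at h1
      linarith [norm_nonneg (ep t - pt (-a) 0)]
  have hDm : ∀ t : ℝ, ‖deriv em t‖ ≤ K * Real.exp (-(k * |t|)) := by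
    intro t
    rcases le_total 0 t with ht | ht
    · have h1 := (hdecayp t ht).2
      rw [abs_of_nonneg ht]
      rw [neg_mul] at h1
      linarith [norm_nonneg (em t - pt a 0)]
    · have h1 := (hdecaym t ht).2
      rw [abs_of_nonpos ht]
      have he : k * t = -(k * -t) := by ring
      rw [he] at h1
      linarith [norm_nonneg (em t - pt (-a) 0)]
  -- distance of both connections to the nearest well
  have hQ : ∀ t : ℝ, ∃ q : E2, (W q = 0 ∧ ∀ u : E2, ‖u - q‖ ≤ K → W u ≤ M * ‖u - q‖ ^ 2) ∧
      ‖ep t - q‖ ≤ K * Real.exp (-(k * |t|)) ∧ ‖em t - q‖ ≤ K * Real.exp (-(k * |t|)) := by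
    intro t
    rcases le_total 0 t with ht | ht
    · refine ⟨pt a 0, ⟨hWzero.1, fun u hu => (hM₁ u hu).trans ?_⟩, ?_, ?_⟩
      · have := sq_nonneg ‖u - pt a 0‖
        nlinarith [le_max_left M₁ M₂]
      · have h1 := (hdecayp t ht).1
        rw [abs_of_nonneg ht]
        rw [neg_mul] at h1
        linarith [norm_nonneg (deriv ep t)]
      · have h1 := (hdecayp t ht).2
        rw [abs_of_nonneg ht]
        rw [neg_mul] at h1
        linarith [norm_nonneg (deriv em t)]
    · refine ⟨pt (-a) 0, ⟨hWzero.2, fun u hu => (hM₂ u hu).trans ?_⟩, ?_, ?_⟩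
      · have := sq_nonneg ‖u - pt (-a) 0‖
        nlinarith [le_max_right M₁ M₂]
      · have h1 := (hdecaym t ht).1
        rw [abs_of_nonpos ht]
        have he : k * t = -(k * -t) := by ring
        rw [he] at h1
        linarith [norm_nonneg (deriv ep t)]
      · have h1 := (hdecaym t ht).2
        rw [abs_of_nonpos ht]
        have he : k * t = -(k * -t) := by ring
        rw [he] at h1
        linarith [norm_nonneg (deriv em t)]
  -- pointwise bound on the middle strip
  have hmid : ∀ x : ℝ × ℝ, x.2 ∈ Ioo (-1 : ℝ) 1 →
      (1 / 2) * gradSq (tildeu ep em) x + W (tildeu ep em x)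
        ≤ c * Real.exp (-(2 * k) * |x.1|) := by
    intro x hx
    obtain ⟨hv1, hv2⟩ := middle_deriv_eval ep em hep hem x hx.1 hx.2
    set t : ℝ := x.1 with hts
    set s : ℝ := x.2 with hss
    set E : ℝ := Real.exp (-(k * |t|)) with hE
    have hEpos : 0 < E := Real.exp_pos _
    have hE1 : E ≤ 1 := Real.exp_le_one_iff.mpr (neg_nonpos.mpr (by positivity))
    obtain ⟨q, ⟨hWq, hquad⟩, hq1, hq2⟩ := hQ t
    have hs1 : (0:ℝ) ≤ (1 + s) / 2 := by cases hx with | intro h1 h2 => linarith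
    have hs2 : (0:ℝ) ≤ (1 - s) / 2 := by cases hx with | intro h1 h2 => linarith
    have hs3 : (1 + s) / 2 ≤ 1 := by cases hx with | intro h1 h2 => linarith
    have hs4 : (1 - s) / 2 ≤ 1 := by cases hx with | intro h1 h2 => linarith
    -- bound on the first partial derivative
    have hb1 : ‖fderiv ℝ (tildeu ep em) x ((1:ℝ), (0:ℝ))‖ ≤ 2 * (K * E) := by
      rw [hv1]
      calc ‖((1 + s)/2) • deriv ep t + ((1 - s)/2) • deriv em t‖
          ≤ ‖((1 + s)/2) • deriv ep t‖ + ‖((1 - s)/2) • deriv em t‖ := norm_add_le _ _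
        _ = |(1 + s)/2| * ‖deriv ep t‖ + |(1 - s)/2| * ‖deriv em t‖ := by
            rw [norm_smul, norm_smul, Real.norm_eq_abs, Real.norm_eq_abs]
        _ ≤ 2 * (K * E) := by
            rw [abs_of_nonneg hs1, abs_of_nonneg hs2]
            have h1 : (1 + s)/2 * ‖deriv ep t‖ ≤ 1 * (K * E) :=
              mul_le_mul hs3 (hDp t) (norm_nonneg _) zero_le_one
            have h2 : (1 - s)/2 * ‖deriv em t‖ ≤ 1 * (K * E) :=
              mul_le_mul hs4 (hDm t) (norm_nonneg _) zero_le_one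
            linarith
    -- bound on the second partial derivative
    have hb2 : ‖fderiv ℝ (tildeu ep em) x ((0:ℝ), (1:ℝ))‖ ≤ K * E := by
      rw [hv2]
      have h1 : (2⁻¹ : ℝ) • ep t - (2⁻¹ : ℝ) • em t = (2⁻¹ : ℝ) • (ep t - em t) := by module
      rw [h1, norm_smul]
      have h2 : ‖ep t - em t‖ ≤ ‖ep t - q‖ + ‖em t - q‖ := by
        calc ‖ep t - em t‖ ≤ ‖ep t - q‖ + ‖q - em t‖ := norm_sub_le_norm_sub_add_norm_sub _ _ _
          _ = ‖ep t - q‖ + ‖em t - q‖ := by rw [norm_sub_rev q]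
      have h3 : ‖(2⁻¹:ℝ)‖ = 2⁻¹ := by norm_num
      rw [h3]
      linarith
    -- the value of tildeu on the middle strip
    have htux : tildeu ep em x = ((1 + s)/2) • ep t + ((1 - s)/2) • em t := by
      simp only [tildeu, ← hts, ← hss, if_neg (not_le.mpr hx.2), if_neg (not_le.mpr hx.1)]
    have hkey : tildeu ep em x - q = ((1 + s)/2) • (ep t - q) + ((1 - s)/2) • (em t - q) := by
      rw [htux]
      module
    have hdist : ‖tildeu ep em x - q‖ ≤ K * E := by
      rw [hkey]
      calc ‖((1 + s)/2) • (ep t - q) + ((1 - s)/2) • (em t - q)‖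
          ≤ ‖((1 + s)/2) • (ep t - q)‖ + ‖((1 - s)/2) • (em t - q)‖ := norm_add_le _ _
        _ = |(1 + s)/2| * ‖ep t - q‖ + |(1 - s)/2| * ‖em t - q‖ := by
            rw [norm_smul, norm_smul, Real.norm_eq_abs, Real.norm_eq_abs]
        _ ≤ (1 + s)/2 * (K * E) + (1 - s)/2 * (K * E) := by
            rw [abs_of_nonneg hs1, abs_of_nonneg hs2]
            have h1 : (1 + s)/2 * ‖ep t - q‖ ≤ (1 + s)/2 * (K * E) :=
              mul_le_mul_of_nonneg_left hq1 hs1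
            have h2 : (1 - s)/2 * ‖em t - q‖ ≤ (1 - s)/2 * (K * E) :=
              mul_le_mul_of_nonneg_left hq2 hs2
            linarith
        _ = K * E := by ring
    have hWu : W (tildeu ep em x) ≤ M * (K * E) ^ 2 := by
      have hle : ‖tildeu ep em x - q‖ ≤ K := by
        refine hdist.trans ?_
        calc K * E ≤ K * 1 := mul_le_mul_of_nonneg_left hE1 hK.le
          _ = K := mul_one K
      refine (hquad _ hle).trans ?_
      have h9 : ‖tildeu ep em x - q‖ ^ 2 ≤ (K * E) ^ 2 :=
        pow_le_pow_left₀ (norm_nonneg _) hdist 2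
      exact mul_le_mul_of_nonneg_left h9 hM0
    -- assembling
    have hE2 : E ^ 2 = Real.exp (-(2 * k) * |t|) := by
      rw [hE, sq, ← Real.exp_add]
      ring_nf
    have hgs : gradSq (tildeu ep em) x ≤ (2 * (K * E)) ^ 2 + (K * E) ^ 2 := by
      unfold gradSq
      have g1 : ‖fderiv ℝ (tildeu ep em) x ((1:ℝ), (0:ℝ))‖ ^ 2 ≤ (2 * (K * E)) ^ 2 :=
        pow_le_pow_left₀ (norm_nonneg _) hb1 2
      have g2 : ‖fderiv ℝ (tildeu ep em) x ((0:ℝ), (1:ℝ))‖ ^ 2 ≤ (K * E) ^ 2 :=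
        pow_le_pow_left₀ (norm_nonneg _) hb2 2
      linarith
    calc (1 / 2) * gradSq (tildeu ep em) x + W (tildeu ep em x)
        ≤ (1 / 2) * ((2 * (K * E)) ^ 2 + (K * E) ^ 2) + M * (K * E) ^ 2 := by linarith
      _ = (5 / 2 + M) * K ^ 2 * E ^ 2 := by ring
      _ = c * Real.exp (-(2 * k) * |t|) := by rw [hE2, hcdef]
  -- the constant
  set J : ℝ := ∫ t in Ioi (0:ℝ), c * Real.exp (-(2 * k) * t) with hJdef
  have hJint : IntegrableOn (fun t => c * Real.exp (-(2 * k) * t)) (Ioi (0:ℝ)) :=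
    (exp_neg_integrableOn_Ioi 0 (by positivity : (0:ℝ) < 2 * k)).const_mul c
  have hJ0 : 0 ≤ J := setIntegral_nonneg measurableSet_Ioi (fun t _ => by positivity)
  have hJeq : ∫⁻ t in Ioi (0:ℝ), ENNReal.ofReal (c * Real.exp (-(2 * k) * t))
      = ENNReal.ofReal J :=
    (ofReal_integral_eq_lintegral_ofReal hJint (ae_of_all _ (fun t => by positivity))).symm
  refine ⟨4 * J, fun R hR => ?_⟩
  set f : ℝ × ℝ → ℝ≥0∞ := fun x =>
    ENNReal.ofReal ((1 / 2) * gradSq (tildeu ep em) x + W (tildeu ep em x)) with hfdef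
  -- side strips
  have hfp : Measurable fun t : ℝ => ENNReal.ofReal ((1/2) * ‖deriv ep t‖ ^ 2 + W (ep t)) :=
    ENNReal.measurable_ofReal.comp
      ((continuous_const.mul ((hepd.norm).pow 2)).add (hWc.comp hepc)).measurable
  have hfm : Measurable fun t : ℝ => ENNReal.ofReal ((1/2) * ‖deriv em t‖ ^ 2 + W (em t)) :=
    ENNReal.measurable_ofReal.comp
      ((continuous_const.mul ((hemd.norm).pow 2)).add (hWc.comp hemc)).measurable
  have hside_p : ∫⁻ x in Set.univ ×ˢ Ioo (1:ℝ) R, f x = ENNReal.ofReal ((R - 1) * Emin) := by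
    have h1 : ∫⁻ x in Set.univ ×ˢ Ioo (1:ℝ) R, f x
        = ∫⁻ x in Set.univ ×ˢ Ioo (1:ℝ) R,
            (fun t => ENNReal.ofReal ((1/2) * ‖deriv ep t‖ ^ 2 + W (ep t))) x.1 := by
      refine setLIntegral_congr_fun (MeasurableSet.univ.prod measurableSet_Ioo)
        (fun x hx => ?_)
      obtain ⟨e1, e2⟩ := side_deriv_eval_p ep em hep x hx.2.1
      have htux : tildeu ep em x = ep x.1 := by
        simp only [tildeu, if_pos hx.2.1.le]
      simp only [hfdef, gradSq, e1, e2, htux, norm_zero]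
      norm_num
    rw [h1, lintegral_prod_left_const _ hfp, hEp, Real.volume_Ioo,
      ← ENNReal.ofReal_mul (by linarith : (0:ℝ) ≤ R - 1)]
  have hside_m : ∫⁻ x in Set.univ ×ˢ Ioo (-R) (-1:ℝ), f x = ENNReal.ofReal ((R - 1) * Emin) := by
    have h1 : ∫⁻ x in Set.univ ×ˢ Ioo (-R) (-1:ℝ), f x
        = ∫⁻ x in Set.univ ×ˢ Ioo (-R) (-1:ℝ),
            (fun t => ENNReal.ofReal ((1/2) * ‖deriv em t‖ ^ 2 + W (em t))) x.1 := by
      refine setLIntegral_congr_fun (MeasurableSet.univ.prod measurableSet_Ioo)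
        (fun x hx => ?_)
      obtain ⟨e1, e2⟩ := side_deriv_eval_m ep em hem x hx.2.2
      have hn1 : ¬ (1 ≤ x.2) := by push_neg; linarith [hx.2.2]
      have htux : tildeu ep em x = em x.1 := by
        simp only [tildeu, if_neg hn1, if_pos hx.2.2.le]
      simp only [hfdef, gradSq, e1, e2, htux, norm_zero]
      norm_num
    rw [h1, lintegral_prod_left_const _ hfm, hEm, Real.volume_Ioo,
      show (-1 - -R : ℝ) = R - 1 by ring,
      ← ENNReal.ofReal_mul (by linarith : (0:ℝ) ≤ R - 1)]
  -- middle strip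
  have hmiddle : ∫⁻ x in Set.univ ×ˢ Icc (-1:ℝ) 1, f x ≤ ENNReal.ofReal (4 * J) := by
    have hae : (Set.univ ×ˢ Icc (-1:ℝ) 1 : Set (ℝ × ℝ))
        =ᵐ[volume] (Set.univ ×ˢ Ioo (-1:ℝ) 1 : Set (ℝ × ℝ)) := by
      rw [MeasureTheory.ae_eq_set]
      constructor
      · refine measure_mono_null (fun x hx => ?_)
          (show volume (Set.univ ×ˢ ({-1, 1} : Set ℝ) : Set (ℝ × ℝ)) = 0 from ?_)
        · obtain ⟨hx1, hx2⟩ := hx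
          refine ⟨trivial, ?_⟩
          have h1 : x.2 ∈ Icc (-1:ℝ) 1 := hx1.2
          have h2 : x.2 ∉ Ioo (-1:ℝ) 1 := fun hh => hx2 ⟨trivial, hh⟩
          simp only [mem_Icc] at h1
          simp only [mem_Ioo, not_and_or, not_lt] at h2
          rcases h2 with h2 | h2
          · left; linarith
          · right; simp only [mem_singleton_iff]; linarith
        · rw [Measure.volume_eq_prod, Measure.prod_prod]
          have : volume ({-1, 1} : Set ℝ) = 0 :=
            ((Set.finite_singleton (1:ℝ)).insert (-1)).measure_zero volume
          rw [this, mul_zero]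
      · have : (Set.univ ×ˢ Ioo (-1:ℝ) 1 : Set (ℝ × ℝ)) \ (Set.univ ×ˢ Icc (-1:ℝ) 1) = ∅ := by
          apply diff_eq_empty.mpr
          exact prod_mono_right Ioo_subset_Icc_self
        rw [this]
        simp
    rw [setLIntegral_congr hae]
    have hgmeas : Measurable fun x : ℝ × ℝ =>
        ENNReal.ofReal (c * Real.exp (-(2 * k) * |x.1|)) := by
      apply ENNReal.measurable_ofReal.comp
      exact (continuous_const.mul ((Real.continuous_exp.comp
        (continuous_const.mul (continuous_abs.comp continuous_fst))))).measurable
    have hstep : ∫⁻ x in Set.univ ×ˢ Ioo (-1:ℝ) 1, f x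
        ≤ ∫⁻ x in Set.univ ×ˢ Ioo (-1:ℝ) 1,
            (fun t => ENNReal.ofReal (c * Real.exp (-(2 * k) * |t|))) x.1 := by
      refine setLIntegral_mono (hgmeas) (fun x hx => ENNReal.ofReal_le_ofReal (hmid x hx.2))
    refine hstep.trans ?_
    have hgm1 : Measurable fun t : ℝ => ENNReal.ofReal (c * Real.exp (-(2 * k) * |t|)) :=
      ENNReal.measurable_ofReal.comp
        (continuous_const.mul (Real.continuous_exp.comp
          (continuous_const.mul continuous_abs))).measurable
    rw [lintegral_prod_left_const (fun t : ℝ => ENNReal.ofReal (c * Real.exp (-(2 * k) * |t|)))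
      hgm1]
    -- split the line integral at 0
    have hsplit2 : ∫⁻ t : ℝ, ENNReal.ofReal (c * Real.exp (-(2 * k) * |t|))
        = ENNReal.ofReal J + ENNReal.ofReal J := by
      rw [← lintegral_add_compl (fun t : ℝ => ENNReal.ofReal (c * Real.exp (-(2 * k) * |t|)))
        (measurableSet_Iic (a := (0:ℝ))), compl_Iic]
      congr 1
      · calc ∫⁻ t in Iic (0:ℝ), ENNReal.ofReal (c * Real.exp (-(2 * k) * |t|))
            = ∫⁻ t in Iic (0:ℝ),
                (fun y => ENNReal.ofReal (c * Real.exp (-(2 * k) * y))) (-t) := by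
              refine setLIntegral_congr_fun measurableSet_Iic (fun t ht => ?_)
              rw [abs_of_nonpos ht]
          _ = ∫⁻ y in Ioi (0:ℝ), ENNReal.ofReal (c * Real.exp (-(2 * k) * y)) :=
              lintegral_Iic_neg (fun y => ENNReal.ofReal (c * Real.exp (-(2 * k) * y)))
          _ = ENNReal.ofReal J := hJeq
      · have h2 : ∫⁻ t in Ioi (0:ℝ), ENNReal.ofReal (c * Real.exp (-(2 * k) * |t|))
            = ∫⁻ t in Ioi (0:ℝ), ENNReal.ofReal (c * Real.exp (-(2 * k) * t)) := by
          refine setLIntegral_congr_fun measurableSet_Ioi (fun t ht => ?_)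
          rw [abs_of_pos ht]
        rw [h2, hJeq]
    rw [hsplit2, Real.volume_Ioo, ← ENNReal.ofReal_add hJ0 hJ0,
      show (1 - (-1) : ℝ) = 2 by norm_num, ← ENNReal.ofReal_mul (by norm_num : (0:ℝ) ≤ 2),
      show (2 * (J + J) : ℝ) = 4 * J by ring]
  -- assembling the three strips
  have hsub : Ioo (-R) R ⊆ Ioo (-R) (-1:ℝ) ∪ (Icc (-1:ℝ) 1 ∪ Ioo (1:ℝ) R) := by
    intro y hy
    simp only [mem_Ioo, mem_Icc, mem_union] at hy ⊢
    rcases lt_or_ge y (-1) with h | h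
    · exact Or.inl ⟨hy.1, h⟩
    · rcases le_or_gt y 1 with h' | h'
      · exact Or.inr (Or.inl ⟨h, h'⟩)
      · exact Or.inr (Or.inr ⟨h', hy.2⟩)
  calc ∫⁻ x in Set.univ ×ˢ Ioo (-R) R, f x
      ≤ ∫⁻ x in Set.univ ×ˢ (Ioo (-R) (-1:ℝ) ∪ (Icc (-1:ℝ) 1 ∪ Ioo (1:ℝ) R)), f x :=
        lintegral_mono_set (prod_mono_right hsub)
    _ ≤ (∫⁻ x in Set.univ ×ˢ Ioo (-R) (-1:ℝ), f x)
        + ∫⁻ x in Set.univ ×ˢ (Icc (-1:ℝ) 1 ∪ Ioo (1:ℝ) R), f x := by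
        rw [prod_union]
        exact lintegral_union_le _ _ _
    _ ≤ (∫⁻ x in Set.univ ×ˢ Ioo (-R) (-1:ℝ), f x)
        + ((∫⁻ x in Set.univ ×ˢ Icc (-1:ℝ) 1, f x) + ∫⁻ x in Set.univ ×ˢ Ioo (1:ℝ) R, f x) := by
        gcongr
        rw [prod_union]
        exact lintegral_union_le _ _ _
    _ ≤ ENNReal.ofReal ((R - 1) * Emin)
        + (ENNReal.ofReal (4 * J) + ENNReal.ofReal ((R - 1) * Emin)) := by
        rw [hside_m, hside_p]
        gcongr
    _ ≤ ENNReal.ofReal (2 * R * Emin + 4 * J) := by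
        have hJ4 : (0:ℝ) ≤ 4 * J := by linarith
        have hRE : (0:ℝ) ≤ (R - 1) * Emin := mul_nonneg (by linarith) hE0
        rw [← ENNReal.ofReal_add hJ4 hRE, ← ENNReal.ofReal_add hRE (by linarith)]
        apply ENNReal.ofReal_le_ofReal
        nlinarith
end
end
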